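/- arXiv:1210.1474 — 10 statements merged into one kernel-verified Lean document; each statement's English description precedes it below -/
import Mathlib

section
/- Let D be an integral domain with fraction field K, let g ∈ D[x] and d ∈ D \ {0}, and let f = g/d ∈ K[x]. Then f maps every matrix in M_n(D) into M_n(D) if and only if g is divisible modulo dD[x] by every monic polynomial in D[x] of degree n (i.e., for every monic h ∈ D[x] of degree n there exist q, r ∈ D[x] with g = qh + dr). -/
open Polynomial Matrix

section helpers

variable {D : Type*} [CommRing D]

/-- Companion-type matrix of `h` (degree `n`). -/
def compM (n : ℕ) (h : D[X]) : Matrix (Fin n) (Fin n) D :=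
  Matrix.of fun i j => if (i : ℕ) = (j : ℕ) + 1 then 1
    else if (j : ℕ) + 1 = n then -h.coeff i else 0

lemma compM_pow_mulVec (n : ℕ) [NeZero n] (h : D[X]) (k : ℕ) (hk : k < n) :
    (compM n h ^ k) *ᵥ (Pi.single (0 : Fin n) 1) = Pi.single (⟨k, hk⟩ : Fin n) 1 := by
  induction k with
  | zero =>
    rw [pow_zero, Matrix.one_mulVec]
    congr 1
  | succ k ih =>
    rw [pow_succ', ← Matrix.mulVec_mulVec, ih (Nat.lt_of_succ_lt hk)]
    rw [Matrix.mulVec_single_one]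
    funext i
    have hkn : ¬((k:ℕ)+1 = n) := by omega
    simp only [compM, Matrix.col_apply, Matrix.of_apply, mul_one, Pi.single_apply, Fin.ext_iff, hkn, if_false]

end helpers

section helpers2
variable {D : Type*} [CommRing D]

lemma sum_mulVec' {m ι : Type*} [Fintype m] (s : Finset ι) (f : ι → Matrix m m D)
    (v : m → D) : (∑ j ∈ s, f j) *ᵥ v = ∑ j ∈ s, (f j) *ᵥ v := by
  classical
  induction s using Finset.cons_induction with
  | empty => simp [Matrix.zero_mulVec]
  | cons a s ha ih => rw [Finset.sum_cons, Finset.sum_cons, Matrix.add_mulVec, ih]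

lemma sum_part (n : ℕ) [NeZero n] (h p : D[X]) :
    (∑ i ∈ Finset.range n, p.coeff i • ((compM n h) ^ i *ᵥ Pi.single (0 : Fin n) 1))
      = fun j : Fin n => p.coeff j := by
  have key : ∀ i ∈ Finset.range n,
      p.coeff i • ((compM n h) ^ i *ᵥ Pi.single (0 : Fin n) 1)
        = fun j : Fin n => if (j : ℕ) = i then p.coeff i else 0 := by
    intro i hi
    rw [compM_pow_mulVec n h i (Finset.mem_range.1 hi)]
    funext j
    simp [Pi.single_apply, Fin.ext_iff]
  rw [Finset.sum_congr rfl key]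
  funext j
  rw [Finset.sum_apply]
  simp [Finset.sum_ite_eq, j.isLt]

lemma aeval_compM_mulVec (n : ℕ) [NeZero n] (h p : D[X]) (hp : p.natDegree < n) :
    (Polynomial.aeval (compM n h) p) *ᵥ Pi.single (0 : Fin n) 1 = fun j : Fin n => p.coeff j := by
  rw [Polynomial.aeval_eq_sum_range' hp, sum_mulVec']
  simp only [Matrix.smul_mulVec]
  rw [sum_part]

lemma compM_pow_n (n : ℕ) [NeZero n] (h : D[X]) :
    (compM n h) ^ n *ᵥ Pi.single (0 : Fin n) 1 = fun i : Fin n => -h.coeff i := by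
  obtain ⟨m, rfl⟩ : ∃ m, n = m + 1 := ⟨n - 1, by have := NeZero.pos n; omega⟩
  rw [pow_succ', ← Matrix.mulVec_mulVec, compM_pow_mulVec _ h m (Nat.lt_succ_self m),
    Matrix.mulVec_single]
  funext i
  have hi : ¬((i : ℕ) = m + 1) := by have := i.isLt; omega
  simp [compM, hi]

lemma aeval_compM_self (n : ℕ) [NeZero n] (h : D[X]) (hm : h.Monic) (hdeg : h.natDegree = n) :
    (Polynomial.aeval (compM n h) h) *ᵥ Pi.single (0 : Fin n) 1 = 0 := by
  rw [Polynomial.aeval_eq_sum_range' (show h.natDegree < n + 1 by omega), sum_mulVec',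
    Finset.sum_range_succ]
  simp only [Matrix.smul_mulVec]
  rw [sum_part, compM_pow_n]
  funext j
  have hcn : h.coeff n = 1 := by rw [← hdeg]; exact hm.coeff_natDegree
  simp [hcn]
end helpers2

section helpers3
variable {D K : Type*} [CommRing D] [CommRing K] [Algebra D K] {n : ℕ}

lemma aeval_matrix_map (M : Matrix (Fin n) (Fin n) D) (p : D[X]) :
    Polynomial.aeval (M.map (algebraMap D K)) (p.map (algebraMap D K))
      = (Polynomial.aeval M p).map (algebraMap D K) := by
  rw [Polynomial.aeval_map_algebraMap]
  have hM : M.map (algebraMap D K) = (AlgHom.mapMatrix (Algebra.ofId D K)) M := rfl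
  rw [hM, Polynomial.aeval_algHom_apply]
  rfl

lemma matrix_map_smul (d : D) (B : Matrix (Fin n) (Fin n) D) :
    (d • B).map (algebraMap D K) = (algebraMap D K d) • B.map (algebraMap D K) := by
  ext i j
  simp [Matrix.map_apply]
end helpers3

/-- Fact (Frisch): for `f = g/d ∈ K[x]`, `f` maps `Mₙ(D)` into `Mₙ(D)` iff `g` is
divisible modulo `dD[x]` by every monic polynomial in `D[x]` of degree `n`. -/
theorem stmt_0 {D K : Type*} [CommRing D] [IsDomain D] [Field K] [Algebra D K]
    [IsFractionRing D K] (n : ℕ) (g : D[X]) (d : D) (hd : d ≠ 0)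
    (f : K[X]) (hf : f = Polynomial.C ((algebraMap D K d)⁻¹) * g.map (algebraMap D K)) :
    (∀ C : Matrix (Fin n) (Fin n) D, ∃ B : Matrix (Fin n) (Fin n) D,
        Polynomial.aeval (C.map (algebraMap D K)) f = B.map (algebraMap D K)) ↔
      (∀ h : D[X], h.Monic → h.natDegree = n →
        ∃ q r : D[X], g = q * h + Polynomial.C d * r) := by
  subst hf
  have hinj : Function.Injective (algebraMap D K) := IsFractionRing.injective D K
  have hd' : algebraMap D K d ≠ 0 := fun hc => hd (hinj (by simpa using hc))
  have keyval : ∀ (M : Matrix (Fin n) (Fin n) D),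
      Polynomial.aeval (M.map (algebraMap D K))
          (Polynomial.C ((algebraMap D K d)⁻¹) * g.map (algebraMap D K))
        = (algebraMap D K d)⁻¹ • (Polynomial.aeval M g).map (algebraMap D K) := by
    intro M
    rw [_root_.map_mul, Polynomial.aeval_C, aeval_matrix_map, Algebra.algebraMap_eq_smul_one,
      smul_mul_assoc, one_mul]
  constructor
  · intro H h hm hdeg
    rcases Nat.eq_zero_or_pos n with hn | hn
    · subst hn
      have h1 : h = 1 := hm.natDegree_eq_zero.mp hdeg
      exact ⟨g, 0, by simp [h1]⟩
    · haveI : NeZero n := ⟨hn.ne'⟩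
      obtain ⟨B, hB⟩ := H (compM n h)
      rw [keyval] at hB
      have key : Polynomial.aeval (compM n h) g = d • B := by
        apply Matrix.map_injective hinj
        show ((Polynomial.aeval (compM n h)) g).map (algebraMap D K)
          = (d • B).map (algebraMap D K)
        rw [matrix_map_smul]
        rw [← smul_inv_smul₀ hd' ((Polynomial.aeval (compM n h) g).map (algebraMap D K)), hB]
      -- division by monic h
      set s : D[X] := g %ₘ h with hs_def
      have hsdeg : s.natDegree < n := by
        rcases eq_or_ne s 0 with h0 | h0
        · rw [h0]; simpa using hn
        · rw [← hdeg]
          exact Polynomial.natDegree_lt_natDegree h0 (Polynomial.degree_modByMonic_lt g hm)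
      have hgC : (Polynomial.aeval (compM n h) g) *ᵥ Pi.single (0 : Fin n) 1
          = fun j : Fin n => s.coeff j := by
        conv_lhs => rw [← Polynomial.modByMonic_add_div g h]
        rw [map_add, Matrix.add_mulVec, aeval_compM_mulVec n h s hsdeg, mul_comm h,
          _root_.map_mul, ← Matrix.mulVec_mulVec, aeval_compM_self n h hm hdeg,
          Matrix.mulVec_zero, add_zero]
      have hcoeff : ∀ j : Fin n, s.coeff j = d * (B *ᵥ Pi.single (0 : Fin n) 1) j := by
        intro j
        have := congrFun hgC.symm j
        rwa [key, Matrix.smul_mulVec, Pi.smul_apply, smul_eq_mul] at this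
      set w : ℕ → D := fun k => if hk : k < n then (B *ᵥ Pi.single (0 : Fin n) 1) ⟨k, hk⟩ else 0
        with hw_def
      refine ⟨g /ₘ h, ∑ j ∈ Finset.range n, Polynomial.monomial j (w j), ?_⟩
      have hsr : s = Polynomial.C d * ∑ j ∈ Finset.range n, Polynomial.monomial j (w j) := by
        ext k
        rw [Polynomial.coeff_C_mul, Polynomial.finset_sum_coeff]
        simp only [Polynomial.coeff_monomial]
        rw [Finset.sum_ite_eq' (Finset.range n) k w]
        simp only [Finset.mem_range]
        by_cases hk : k < n
        · rw [if_pos hk, hw_def]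
          simp only [hk, dif_pos]
          exact hcoeff ⟨k, hk⟩
        · rw [if_neg hk, mul_zero]
          exact Polynomial.coeff_eq_zero_of_natDegree_lt (by omega)
      conv_lhs => rw [← Polynomial.modByMonic_add_div g h]
      rw [← hs_def, hsr, mul_comm h]
      ring
  · intro H C
    obtain ⟨q, r, hqr⟩ := H C.charpoly C.charpoly_monic
      (by simp [Matrix.charpoly_natDegree_eq_dim])
    refine ⟨Polynomial.aeval C r, ?_⟩
    rw [keyval]
    have : Polynomial.aeval C g = d • Polynomial.aeval C r := by
      rw [hqr, map_add, _root_.map_mul, _root_.map_mul, Matrix.aeval_self_charpoly, mul_zero, zero_add,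
        Polynomial.aeval_C, Algebra.algebraMap_eq_smul_one, smul_mul_assoc, one_mul]
    rw [this, matrix_map_smul, inv_smul_smul₀ hd']
end

section
/- Let D be an integral domain in which the intersection of all maximal ideals of finite index is (0). For any d ∈ D \ {0} and any monic polynomial h ∈ D[x] of degree n, there exists a monic polynomial k ∈ D[x] of degree n that is irreducible in D[x] and congruent to h modulo dD[x]. -/
open Polynomial


lemma my_exists_monic_irreducible {F : Type*} [Field F] [Fintype F]
    {n : ℕ} (hn : n ≠ 0) : ∃ g : F[X], g.Monic ∧ Irreducible g ∧ g.natDegree = n := by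
  classical
  obtain ⟨p, hpc⟩ := CharP.exists F
  haveI := hpc
  have hp : p.Prime := CharP.char_is_prime F p
  haveI : Fact p.Prime := ⟨hp⟩
  obtain ⟨m, -, hcard⟩ := FiniteField.card F p
  set q := Fintype.card F with hq
  have hq1 : 1 < q := Fintype.one_lt_card
  set g : F[X] := X ^ q ^ n - X with hgdef
  have hgne : g ≠ 0 := FiniteField.X_pow_card_pow_sub_X_ne_zero _ hn hq1
  set E := g.SplittingField with hE
  haveI : Finite E := Module.finite_of_finite F
  haveI : Fintype E := Fintype.ofFinite E
  haveI : CharP E p := charP_of_injective_algebraMap' F (A := E) p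
  have hpq : p ∣ q ^ n := hcard ▸ dvd_pow (dvd_pow_self p m.ne_zero) hn
  have sep : g.Separable := galois_poly_separable p (q ^ n) hpq
  have hqn : (q : ℕ) ^ n = p ^ (m * n) := by rw [hcard, ← pow_mul]
  -- the root set is everything
  have hroot : ∀ x : E, x ∈ g.rootSet E ↔ x ^ q ^ n = x := by
    intro x
    rw [mem_rootSet_of_ne hgne]
    simp [hgdef, sub_eq_zero]
  have huniv : g.rootSet E = Set.univ := by
    haveI : ExpChar E p := ExpChar.prime hp
    set S : Subring E := RingHom.eqLocus (iterateFrobenius E p (m * n)) (RingHom.id E)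
      with hS
    have hsub : g.rootSet E ⊆ (Subalgebra.toSubring (Algebra.adjoin F (g.rootSet E))) := by
      intro x hx; exact Algebra.subset_adjoin hx
    have hSmem : ∀ x : E, x ∈ S ↔ x ^ q ^ n = x := by
      intro x
      simp [hS, RingHom.eqLocus, iterateFrobenius_def, hqn, Set.mem_setOf_eq]
    have hle : Algebra.adjoin F (g.rootSet E) ≤
        { toSubsemiring := S.toSubsemiring,
          algebraMap_mem' := fun r => by
            show algebraMap F E r ∈ S
            rw [hSmem, ← map_pow, FiniteField.pow_card_pow] } := by
      apply Algebra.adjoin_le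
      intro x hx
      rw [hroot] at hx
      show x ∈ S
      rw [hSmem]; exact hx
    have htop : (⊤ : Subalgebra F E) ≤ _ := (SplittingField.adjoin_rootSet g) ▸ hle
    ext x
    simp only [Set.mem_univ, iff_true]
    rw [hroot]
    have := htop (Algebra.mem_top (x := x))
    exact (hSmem x).mp this
  -- cardinality
  have key : Fintype.card E = q ^ n := by
    have h1 : Fintype.card (g.rootSet E) = g.natDegree :=
      card_rootSet_eq_natDegree sep (SplittingField.splits g)
    have h2 : g.natDegree = q ^ n :=
      FiniteField.X_pow_card_pow_sub_X_natDegree_eq F hn hq1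
    rw [h2] at h1
    simp_rw [huniv, ← Fintype.ofEquiv_card (Equiv.Set.univ _)] at h1
    rw [← h1]; congr 1; exact Subsingleton.elim _ _
  have hrank : Module.finrank F E = n := by
    have := Module.card_eq_pow_finrank (K := F) (V := E)
    rw [key] at this
    exact (Nat.pow_right_injective hq1 this.symm)
  -- primitive element
  obtain ⟨α, hα⟩ := Field.exists_primitive_element F E
  have hint : IsIntegral F α := Algebra.IsIntegral.isIntegral α
  refine ⟨minpoly F α, minpoly.monic hint, minpoly.irreducible hint, ?_⟩
  rw [← IntermediateField.adjoin.finrank hint, ← hrank]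
  rw [hα]
  exact IntermediateField.finrank_top'


/-- If the intersection of the maximal ideals of finite index of a domain `D` is `(0)`,
then every monic polynomial of degree `n ≥ 1` is congruent modulo `dD[x]` to a monic
irreducible polynomial of degree `n`. -/
theorem stmt_1 {D : Type*} [CommRing D] [IsDomain D]
    (hrad : (⨅ P ∈ {P : Ideal D | P.IsMaximal ∧ Finite (D ⧸ P)}, P) = ⊥)
    (n : ℕ) (hn : 0 < n) (d : D) (hd : d ≠ 0)
    (h : D[X]) (hmon : h.Monic) (hdeg : h.natDegree = n) :
    ∃ k : D[X], k.Monic ∧ k.natDegree = n ∧ Irreducible k ∧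
      Polynomial.C d ∣ (k - h) := by
  classical
  have hdP : ∃ P : Ideal D, P.IsMaximal ∧ Finite (D ⧸ P) ∧ d ∉ P := by
    by_contra hcon
    push_neg at hcon
    have hmem : d ∈ (⨅ P ∈ {P : Ideal D | P.IsMaximal ∧ Finite (D ⧸ P)}, P) := by
      rw [Ideal.mem_iInf]
      intro P
      rw [Ideal.mem_iInf]
      intro hP
      exact hcon P hP.1 hP.2
    rw [hrad, Ideal.mem_bot] at hmem
    exact hd hmem
  obtain ⟨P, hPmax, hPfin, hdnP⟩ := hdP
  haveI := hPmax
  letI : Field (D ⧸ P) := Ideal.Quotient.field P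
  haveI : Fintype (D ⧸ P) := Fintype.ofFinite _
  set π : D →+* D ⧸ P := Ideal.Quotient.mk P with hπ
  obtain ⟨g, gmon, girr, gdeg⟩ := my_exists_monic_irreducible (F := D ⧸ P) (n := n) hn.ne'
  have hdbar : π d ≠ 0 := by
    rw [Ne, hπ, Ideal.Quotient.eq_zero_iff_mem]; exact hdnP
  have hmapmon : (h.map π).Monic := hmon.map π
  have hmapdeg : (h.map π).natDegree = n := by rw [hmon.natDegree_map, hdeg]
  have hdegh : h.degree = (n : ℕ) := by
    rw [degree_eq_natDegree hmon.ne_zero, hdeg]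
  have hsub : (g - h.map π).degree < (n : ℕ) := by
    have := degree_sub_lt (p := g) (q := h.map π) ?_ gmon.ne_zero ?_
    · rwa [degree_eq_natDegree gmon.ne_zero, gdeg] at this
    · rw [degree_eq_natDegree gmon.ne_zero, degree_eq_natDegree hmapmon.ne_zero,
        gdeg, hmapdeg]
    · rw [gmon.leadingCoeff, hmapmon.leadingCoeff]
  set r : (D ⧸ P)[X] := Polynomial.C (π d)⁻¹ * (g - h.map π) with hr
  have hrdeg : r.degree < (n : ℕ) := by
    calc r.degree ≤ (g - h.map π).degree := by
          rw [hr]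
          refine (degree_mul_le _ _).trans ?_
          simpa using add_le_add_left (degree_C_le (a := (π d)⁻¹)) _
      _ < (n : ℕ) := hsub
  have hrlift : r ∈ Polynomial.lifts π := by
    rw [lifts_iff_coeff_lifts]
    intro i
    exact Set.mem_range.mpr (Ideal.Quotient.mk_surjective _)
  obtain ⟨m0, hm0, hm0deg⟩ := mem_lifts_and_degree_eq hrlift
  set k := h + Polynomial.C d * m0 with hk
  have hlt : (Polynomial.C d * m0).degree < h.degree := by
    rw [hdegh]
    calc (Polynomial.C d * m0).degree ≤ m0.degree := by
          refine (degree_mul_le _ _).trans ?_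
          simpa using add_le_add_left (degree_C_le (a := d)) _
      _ = r.degree := hm0deg
      _ < (n : ℕ) := hrdeg
  have kmon : k.Monic := hmon.add_of_left hlt
  have hmapk : k.map π = g := by
    rw [hk, Polynomial.map_add, Polynomial.map_mul, map_C, hm0, hr]
    rw [← mul_assoc, ← C_mul, mul_inv_cancel₀ hdbar, C_1, one_mul]
    ring
  have kdeg : k.natDegree = n := by
    have := kmon.natDegree_map π
    rw [hmapk, gdeg] at this
    exact this.symm
  have kirr : Irreducible k :=
    kmon.irreducible_of_irreducible_map π k (by rw [hmapk]; exact girr)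
  exact ⟨k, kmon, kdeg, kirr, ⟨m0, by rw [hk]; ring⟩⟩
end

section
/- Let D be an integral domain with fraction field K such that the intersection of all maximal ideals of D of finite index is (0). Let g ∈ D[x], d ∈ D \ {0}, and f = g/d. Then f ∈ Int_D(M_n(D)) if and only if g is divisible modulo dD[x] by every monic irreducible polynomial in D[x] of degree n. -/
open Polynomial IntermediateField

lemma aeval_matrix_map' {D K : Type*} [CommRing D] [CommRing K] [Algebra D K]
    {m : Type*} [Fintype m] [DecidableEq m] (C : Matrix m m D) (g : D[X]) :
    Polynomial.aeval (C.map (algebraMap D K)) (g.map (algebraMap D K))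
      = (Polynomial.aeval C g).map (algebraMap D K) := by
  have hcomp : ((algebraMap K (Matrix m m K)).comp (algebraMap D K))
      = ((algebraMap D K).mapMatrix.comp (algebraMap D (Matrix m m D))) := by
    apply RingHom.ext; intro a
    ext i j
    simp only [RingHom.comp_apply, Matrix.algebraMap_matrix_apply, RingHom.mapMatrix_apply,
      Matrix.map_apply]
    split <;> simp
  rw [Polynomial.aeval_def, Polynomial.aeval_def, Polynomial.eval₂_map, hcomp,
    ← RingHom.mapMatrix_apply, ← RingHom.mapMatrix_apply, ← Polynomial.hom_eval₂]

lemma exists_monic_irreducible_degree (F : Type*) [Field F] [Finite F] (n : ℕ) (hn : 0 < n) :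
    ∃ π : F[X], π.Monic ∧ Irreducible π ∧ π.natDegree = n := by
  classical
  haveI : Fintype F := Fintype.ofFinite F
  obtain ⟨p, hp⟩ := CharP.exists F
  haveI := hp
  haveI hprime : Fact p.Prime := ⟨CharP.char_is_prime F p⟩
  set q := Fintype.card F with hqdef
  obtain ⟨k, hpk, hq⟩ := FiniteField.card F p
  have hq1 : 1 < q := Fintype.one_lt_card
  set gp : F[X] := X ^ q ^ n - X with hgp
  have hgpdeg : gp.natDegree = q ^ n :=
    FiniteField.X_pow_card_pow_sub_X_natDegree_eq F hn.ne' hq1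
  have hgpne : gp ≠ 0 := FiniteField.X_pow_card_pow_sub_X_ne_zero F hn.ne' hq1
  have hpq : p ∣ q ^ n := by
    show p ∣ Fintype.card F ^ n
    rw [hq]
    exact dvd_pow (dvd_pow_self p k.pos.ne') (by positivity)
  have hsep : gp.Separable := galois_poly_separable p (q ^ n) hpq
  set E := SplittingField gp with hE
  haveI : FiniteDimensional F E := IsSplittingField.finiteDimensional E gp
  haveI : Finite E := Module.finite_of_finite F
  haveI : Fintype E := Fintype.ofFinite E
  haveI : CharP E p := charP_of_injective_algebraMap' F (A := E) p
  have hqn_pow : q ^ n = p ^ (k * n) := by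
    show Fintype.card F ^ n = p ^ ((k : ℕ) * n)
    rw [hq, pow_mul]
  -- the subalgebra of elements fixed by x ↦ x ^ q ^ n
  set S : Subalgebra F E :=
    { carrier := {x : E | x ^ q ^ n = x}
      mul_mem' := by
        intro a b ha hb
        simp only [Set.mem_setOf_eq] at *
        rw [mul_pow, ha, hb]
      one_mem' := by simp
      add_mem' := by
        intro a b ha hb
        simp only [Set.mem_setOf_eq] at *
        rw [hqn_pow] at *
        rw [add_pow_char_pow, ha, hb]
      zero_mem' := by
        simp only [Set.mem_setOf_eq]
        exact zero_pow (by positivity)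
      algebraMap_mem' := by
        intro r
        have hr : r ^ q ^ n = r := FiniteField.pow_card_pow n r
        simp only [Set.mem_setOf_eq, ← map_pow, hr] } with hS
  have hroots : gp.rootSet E ⊆ (S : Set E) := by
    intro x hx
    rw [Polynomial.mem_rootSet_of_ne hgpne] at hx
    simp only [hgp, map_sub, map_pow, Polynomial.aeval_X, sub_eq_zero] at hx
    exact hx
  have htop : ∀ x : E, x ^ q ^ n = x := by
    have hadj : Algebra.adjoin F (gp.rootSet E) = ⊤ := SplittingField.adjoin_rootSet gp
    have hle : (⊤ : Subalgebra F E) ≤ S := by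
      rw [← hadj]
      exact Algebra.adjoin_le hroots
    intro x
    exact hle (Algebra.mem_top)
  have huniv : gp.rootSet E = Set.univ := by
    rw [Set.eq_univ_iff_forall]
    intro x
    rw [Polynomial.mem_rootSet_of_ne hgpne]
    simp only [hgp, map_sub, map_pow, Polynomial.aeval_X, sub_eq_zero]
    exact htop x
  have hcardE : Fintype.card E = q ^ n := by
    have key : Fintype.card (gp.rootSet E) = gp.natDegree :=
      card_rootSet_eq_natDegree hsep (SplittingField.splits gp)
    rw [hgpdeg] at key
    calc Fintype.card E = Fintype.card (Set.univ : Set E) :=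
          (Fintype.card_congr (Equiv.Set.univ E)).symm
      _ = Fintype.card (gp.rootSet E) := (Fintype.card_congr (Equiv.setCongr huniv)).symm
      _ = q ^ n := key
  have hfinrank : Module.finrank F E = n := by
    have := Module.card_eq_pow_finrank (K := F) (V := E)
    rw [hcardE, ← hqdef] at this
    exact (Nat.pow_right_injective hq1 this.symm)
  obtain ⟨α, hα⟩ := Field.exists_primitive_element_of_finite_top F E
  have hint : IsIntegral F α := IsIntegral.of_finite F α
  refine ⟨minpoly F α, minpoly.monic hint, minpoly.irreducible hint, ?_⟩
  have h1 : Module.finrank F F⟮α⟯ = (minpoly F α).natDegree :=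
    IntermediateField.adjoin.finrank hint
  rw [hα] at h1
  rw [← h1, ← hfinrank]
  exact (IntermediateField.topEquiv (F := F) (E := E)).toLinearEquiv.finrank_eq

/-- Proposition: if the intersection of maximal ideals of finite index of `D` is `(0)`,
then `f = g/d ∈ Int_D(Mₙ(D))` iff `g` is divisible modulo `dD[x]` by every monic
irreducible polynomial in `D[x]` of degree `n`. -/
theorem stmt_2 {D K : Type*} [CommRing D] [IsDomain D] [Field K] [Algebra D K]
    [IsFractionRing D K]
    (hrad : (⨅ P ∈ {P : Ideal D | P.IsMaximal ∧ Finite (D ⧸ P)}, P) = ⊥)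
    (n : ℕ) (hn : 0 < n) (g : D[X]) (d : D) (hd : d ≠ 0)
    (f : K[X]) (hf : f = Polynomial.C ((algebraMap D K d)⁻¹) * g.map (algebraMap D K)) :
    (∀ C : Matrix (Fin n) (Fin n) D, ∃ B : Matrix (Fin n) (Fin n) D,
        Polynomial.aeval (C.map (algebraMap D K)) f = B.map (algebraMap D K)) ↔
      (∀ h : D[X], h.Monic → h.natDegree = n → Irreducible h →
        ∃ q r : D[X], g = q * h + Polynomial.C d * r) := by
  constructor
  · intro Hf
    classical
    intro h hmon hdeg _
    subst hdeg
    have hinj : Function.Injective (algebraMap D K) := IsFractionRing.injective D K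
    have hσd : algebraMap D K d ≠ 0 := fun h0 => hd (hinj (h0.trans (map_zero _).symm))
    set pb := AdjoinRoot.powerBasis' hmon with hpbdef
    have hdim : pb.dim = h.natDegree := rfl
    set ψ : AdjoinRoot h →ₐ[D] Matrix (Fin h.natDegree) (Fin h.natDegree) D := ((LinearMap.toMatrixAlgEquiv pb.basis).toAlgHom.comp
        (Algebra.lmul D (AdjoinRoot h))) with hψ
    set M := ψ (AdjoinRoot.root h) with hM
    obtain ⟨B, hB⟩ := Hf M
    rw [hf, map_mul, Polynomial.aeval_C, aeval_matrix_map'] at hB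
    rw [← Algebra.smul_def] at hB
    have hgM : Polynomial.aeval M g = d • B := by
      ext i j
      have := congrFun (congrFun hB i) j
      simp only [Matrix.smul_apply, Matrix.map_apply, smul_eq_mul] at this
      apply hinj
      have h2 := congrArg (fun z => (algebraMap D K d) * z) this
      rw [← mul_assoc, mul_inv_cancel₀ hσd, one_mul] at h2
      rw [Matrix.smul_apply, smul_eq_mul, map_mul]
      exact h2
    -- division
    set r0 : D[X] := g %ₘ h with hr0
    have hsplit : g %ₘ h + h * (g /ₘ h) = g := Polynomial.modByMonic_add_div g h
    have hMh : Polynomial.aeval M h = 0 := by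
      rw [hM, Polynomial.aeval_algHom_apply, AdjoinRoot.aeval_eq, AdjoinRoot.mk_self, map_zero]
    have hr0M : Polynomial.aeval M r0 = d • B := by
      rw [← hgM, ← hsplit, map_add, map_mul, hMh, zero_mul, add_zero]
    have hdeglt : r0.degree < h.degree := Polynomial.degree_modByMonic_lt g hmon
    -- coefficient extraction
    have hds : ∀ k : Fin h.natDegree, r0.coeff k = d * B k ⟨0, hn⟩ := by
      intro k
      have h1 : Polynomial.aeval M r0 = ψ (AdjoinRoot.mk h r0) := by
        rw [hM, Polynomial.aeval_algHom_apply, AdjoinRoot.aeval_eq]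
      have h2 : ∀ (z : AdjoinRoot h) (k j : Fin h.natDegree), (ψ z) k j
          = pb.basis.repr (z * pb.basis j) k := by
        intro z k j
        rw [hψ]
        exact LinearMap.toMatrixAlgEquiv_apply _ _ _ _
      have h3 : pb.basis (⟨0, hn⟩ : Fin h.natDegree) = 1 := by
        exact (pb.basis_eq_pow ⟨0, hn⟩).trans (pow_zero _)
      have h4 : pb.basis.repr (AdjoinRoot.mk h r0) k
          = (AdjoinRoot.modByMonicHom hmon (AdjoinRoot.mk h r0)).coeff k := rfl
      have h5 : r0 %ₘ h = r0 := (Polynomial.modByMonic_eq_self_iff hmon).mpr hdeglt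
      have h6 : (Polynomial.aeval M r0) k ⟨0, hn⟩ = r0.coeff k := by
        rw [h1, h2 _ k ⟨0, hn⟩, h3, mul_one, h4, AdjoinRoot.modByMonicHom_mk, h5]
      rw [← h6, hr0M, Matrix.smul_apply, smul_eq_mul]
    have hdvd : Polynomial.C d ∣ r0 := by
      rw [Polynomial.C_dvd_iff_dvd_coeff]
      intro i
      by_cases hi : i < h.natDegree
      · exact ⟨B ⟨i, hi⟩ ⟨0, hn⟩, hds ⟨i, hi⟩⟩
      · rw [Polynomial.coeff_eq_zero_of_degree_lt]
        · exact dvd_zero d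
        · refine lt_of_lt_of_le hdeglt ?_
          rw [Polynomial.degree_eq_natDegree hmon.ne_zero]
          exact_mod_cast Nat.le_of_not_lt hi
    obtain ⟨r', hr'⟩ := hdvd
    refine ⟨g /ₘ h, r', ?_⟩
    conv_lhs => rw [← hsplit]
    rw [show g %ₘ h = Polynomial.C d * r' from hr']
    ring
  · intro H
    classical
    intro C
    have hinj : Function.Injective (algebraMap D K) := IsFractionRing.injective D K
    have hσd : algebraMap D K d ≠ 0 := fun h0 => hd (hinj (h0.trans (map_zero _).symm))
    -- find a maximal ideal of finite index avoiding d
    have hex : ∃ P : Ideal D, P.IsMaximal ∧ Finite (D ⧸ P) ∧ d ∉ P := by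
      by_contra hc
      push_neg at hc
      have hmem : d ∈ (⨅ P ∈ {P : Ideal D | P.IsMaximal ∧ Finite (D ⧸ P)}, P) := by
        rw [Ideal.mem_iInf]
        intro P
        rw [Ideal.mem_iInf]
        intro hP
        exact hc P hP.1 hP.2
      rw [hrad] at hmem
      exact hd (by simpa using hmem)
    obtain ⟨P, hPmax, hPfin, hdP⟩ := hex
    haveI := hPmax
    letI : Field (D ⧸ P) := Ideal.Quotient.field P
    haveI : Finite (D ⧸ P) := hPfin
    obtain ⟨π, hπmon, hπirr, hπdeg⟩ := exists_monic_irreducible_degree (D ⧸ P) n hn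
    -- lift π to a monic polynomial over D
    have hlift : π ∈ Polynomial.lifts (Ideal.Quotient.mk P) := by
      rw [Polynomial.lifts_iff_coeff_lifts]
      intro i
      exact Ideal.Quotient.mk_surjective (π.coeff i)
    obtain ⟨pt, hptmap, hptdeg, hptmon⟩ := Polynomial.lifts_and_degree_eq_and_monic hlift hπmon
    -- u : inverse of d mod P
    have hunit : IsUnit (Ideal.Quotient.mk P d) := by
      apply isUnit_iff_ne_zero.mpr
      rw [Ne, Ideal.Quotient.eq_zero_iff_mem]
      exact hdP
    obtain ⟨v, hv⟩ := hunit.exists_right_inv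
    obtain ⟨u, rfl⟩ := Ideal.Quotient.mk_surjective v
    have hdu : Ideal.Quotient.mk P (d * u) = 1 := by rw [map_mul]; exact hv
    -- the characteristic polynomial
    set p := C.charpoly with hp
    have hpmon : p.Monic := C.charpoly_monic
    have hpdeg : p.natDegree = n := by
      rw [hp, Matrix.charpoly_natDegree_eq_dim, Fintype.card_fin]
    set w : D[X] := Polynomial.C u * (pt - p) with hw
    set h : D[X] := p + Polynomial.C d * w with hh
    have hpdegE : p.degree = (n : WithBot ℕ) := by
      rw [Polynomial.degree_eq_natDegree hpmon.ne_zero, hpdeg]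
    have hptdegE : pt.degree = (n : WithBot ℕ) := by
      rw [hptdeg, Polynomial.degree_eq_natDegree hπmon.ne_zero, hπdeg]
    have hdegsub : (Polynomial.C d * w).degree < p.degree := by
      have h1 : (pt - p).degree < p.degree := by
        rcases eq_or_ne pt p with heq | hne
        · rw [heq, sub_self, Polynomial.degree_zero, hpdegE]
          exact WithBot.bot_lt_coe n
        · have h2 := Polynomial.degree_sub_lt (hptdegE.trans hpdegE.symm) hptmon.ne_zero
            (by rw [hptmon.leadingCoeff, hpmon.leadingCoeff])
          rwa [hptdegE, ← hpdegE] at h2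
      calc (Polynomial.C d * w).degree ≤ w.degree := by
            refine (Polynomial.degree_mul_le _ _).trans ?_
            refine le_trans (add_le_add_left Polynomial.degree_C_le _) ?_
            simp
        _ ≤ (pt - p).degree := by
            rw [hw]
            refine (Polynomial.degree_mul_le _ _).trans ?_
            refine le_trans (add_le_add_left Polynomial.degree_C_le _) ?_
            simp
        _ < p.degree := h1
    have hhmon : h.Monic := hpmon.add_of_left hdegsub
    have hhdeg : h.natDegree = n := by
      have hdeq : h.degree = p.degree := Polynomial.degree_add_eq_left_of_degree_lt hdegsub
      rw [← hpdeg]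
      exact Polynomial.natDegree_eq_of_degree_eq hdeq
    have hhmap : h.map (Ideal.Quotient.mk P) = π := by
      have hC : (Polynomial.C d * Polynomial.C u : D[X]).map (Ideal.Quotient.mk P) = 1 := by
        rw [← Polynomial.C_mul, Polynomial.map_C, hdu, Polynomial.C_1]
      rw [hh, hw]
      rw [Polynomial.map_add, Polynomial.map_mul, Polynomial.map_mul, Polynomial.map_sub,
        hptmap]
      rw [Polynomial.map_C, Polynomial.map_C]
      have : (Polynomial.C ((Ideal.Quotient.mk P) d) * (Polynomial.C ((Ideal.Quotient.mk P) u))) = 1 := by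
        rw [← Polynomial.C_mul, ← map_mul, hdu, Polynomial.C_1]
      rw [← mul_assoc, this, one_mul]
      ring
    have hhirr : Irreducible h :=
      hhmon.irreducible_of_irreducible_map (Ideal.Quotient.mk P) h
        (by rw [hhmap]; exact hπirr)
    obtain ⟨q, r, hg⟩ := H h hhmon hhdeg hhirr
    -- h(C) = d • w(C)
    have hhC : Polynomial.aeval C h = d • Polynomial.aeval C w := by
      rw [hh, map_add, map_mul, Polynomial.aeval_C, Matrix.aeval_self_charpoly,
        zero_add, Algebra.smul_def]
    have hgC : Polynomial.aeval C g
        = d • (Polynomial.aeval C q * Polynomial.aeval C w + Polynomial.aeval C r) := by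
      rw [hg, map_add, map_mul, map_mul, Polynomial.aeval_C, hhC]
      rw [smul_add, mul_smul_comm, ← Algebra.smul_def]
    refine ⟨Polynomial.aeval C q * Polynomial.aeval C w + Polynomial.aeval C r, ?_⟩
    rw [hf, map_mul, Polynomial.aeval_C, aeval_matrix_map', hgC]
    set B := Polynomial.aeval C q * Polynomial.aeval C w + Polynomial.aeval C r
    have hmapsmul : (d • B).map (algebraMap D K) = (algebraMap D K d) • B.map (algebraMap D K) := by
      ext i j
      simp [Matrix.map_apply, Matrix.smul_apply, map_mul]
    rw [hmapsmul, ← Algebra.smul_def, smul_smul, inv_mul_cancel₀ hσd, one_smul]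
end

section
/- Let D be an integral domain with fraction field K, and let 𝒞_n ⊆ M_n(D) be the set of companion matrices of monic polynomials of degree n in D[x]. Then a polynomial f ∈ K[x] maps every matrix in M_n(D) into M_n(D) if and only if it maps every companion matrix in 𝒞_n into M_n(D). -/
open Polynomial

/-- The companion matrix of a monic polynomial of degree `n`: ones on the
subdiagonal, negated coefficients in the last column. -/
def companionMatrix {D : Type*} [CommRing D] (n : ℕ) (p : D[X]) :
    Matrix (Fin n) (Fin n) D :=
  Matrix.of fun i j =>
    if (j : ℕ) + 1 = (i : ℕ) then 1
    else if (j : ℕ) = n - 1 then -p.coeff (i : ℕ) else 0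

section Aux
open Matrix

variable {R S : Type*} [CommRing R] [CommRing S] {n : ℕ}

lemma companionMatrix_map (f : R →+* S) (p : R[X]) :
    (companionMatrix n p).map f = companionMatrix n (p.map f) := by
  ext i j
  simp [companionMatrix, apply_ite f, Polynomial.coeff_map]

lemma my_sum_mulVec {ι m : Type*} [Fintype m] (s : Finset ι)
    (A : ι → Matrix m m R) (v : m → R) :
    (∑ i ∈ s, A i) *ᵥ v = ∑ i ∈ s, (A i) *ᵥ v := by
  ext j
  simp only [Matrix.mulVec, dotProduct, Matrix.sum_apply, Finset.sum_mul,
    Finset.sum_apply]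
  rw [Finset.sum_comm]

lemma comp_pow_mulVec (p : R[X]) (h0 : 0 < n) :
    ∀ k, (hk : k < n) → ((companionMatrix n p) ^ k) *ᵥ Pi.single (⟨0, h0⟩ : Fin n) 1
      = Pi.single (⟨k, hk⟩ : Fin n) 1
  | 0, hk => by rw [pow_zero, Matrix.one_mulVec]
  | k + 1, hk => by
    rw [pow_succ', ← Matrix.mulVec_mulVec, comp_pow_mulVec p h0 k (by omega),
      Matrix.mulVec_single_one]
    funext i
    simp only [companionMatrix, Matrix.col_apply, Matrix.of_apply, mul_one, Pi.single_apply, Fin.ext_iff]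
    split_ifs with h1 h2 h3 h3 <;> first | rfl | omega

lemma aeval_comp_mulVec (p : R[X]) (h0 : 0 < n) (r : R[X]) (hr : r.natDegree < n) :
    (Polynomial.aeval (companionMatrix n p) r) *ᵥ Pi.single (⟨0, h0⟩ : Fin n) 1
      = fun i : Fin n => r.coeff (i : ℕ) := by
  rw [Polynomial.aeval_eq_sum_range' hr, ← Fin.sum_univ_eq_sum_range, my_sum_mulVec]
  funext i
  simp only [Matrix.smul_mulVec, Finset.sum_apply, Pi.smul_apply]
  rw [Finset.sum_congr rfl (fun k _ => by rw [comp_pow_mulVec p h0 k k.isLt])]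
  simp [Pi.single_apply, Finset.sum_ite_eq]

lemma comp_pow_n_mulVec (p : R[X]) (h0 : 0 < n) :
    ((companionMatrix n p) ^ n) *ᵥ Pi.single (⟨0, h0⟩ : Fin n) 1
      = fun i : Fin n => -p.coeff (i : ℕ) := by
  obtain ⟨m, rfl⟩ : ∃ m, n = m + 1 := ⟨n - 1, by omega⟩
  rw [pow_succ', ← Matrix.mulVec_mulVec, comp_pow_mulVec p h0 m (by omega),
    Matrix.mulVec_single_one]
  funext i
  simp only [companionMatrix, Matrix.col_apply, Matrix.of_apply, mul_one]
  have hi : (i : ℕ) < m + 1 := i.isLt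
  split_ifs with h1 h2 <;> first | rfl | omega

lemma aeval_companionMatrix_self (p : R[X]) (hm : p.Monic) (hd : p.natDegree = n) :
    Polynomial.aeval (companionMatrix n p) p = 0 := by
  rcases subsingleton_or_nontrivial R with hR | hR
  · exact Subsingleton.elim _ _
  rcases Nat.eq_zero_or_pos n with h0 | h0
  · subst h0; ext i j; exact i.elim0
  have hp0 : p ≠ 0 := hm.ne_zero
  have hsub : (p - X ^ n).natDegree < n := by
    rcases eq_or_ne (p - X ^ n) 0 with h | h
    · simpa [h] using h0
    · rw [Polynomial.natDegree_lt_iff_degree_lt h]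
      have hdeg : p.degree = (X ^ n : R[X]).degree := by
        rw [Polynomial.degree_eq_natDegree hp0, hd, Polynomial.degree_X_pow]
      have := Polynomial.degree_sub_lt hdeg hp0
        (by rw [hm.leadingCoeff, (Polynomial.monic_X_pow n).leadingCoeff])
      rw [hdeg, Polynomial.degree_X_pow] at this
      exact this
  have key : (Polynomial.aeval (companionMatrix n p) p) *ᵥ Pi.single (⟨0, h0⟩ : Fin n) 1 = 0 := by
    have hsplit : p = (p - X ^ n) + X ^ n := by ring
    rw [show Polynomial.aeval (companionMatrix n p) p
        = Polynomial.aeval (companionMatrix n p) ((p - X ^ n) + X ^ n) by rw [← hsplit],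
      map_add, Matrix.add_mulVec, aeval_comp_mulVec p h0 (p - X ^ n) hsub,
      map_pow, aeval_X, comp_pow_n_mulVec p h0]
    funext i
    have hi : (i : ℕ) < n := i.isLt
    simp [Polynomial.coeff_X_pow, hi.ne, Polynomial.coeff_sub]
  have hcol : ∀ j : Fin n, (Polynomial.aeval (companionMatrix n p) p) *ᵥ Pi.single j 1 = 0 := by
    intro j
    have hMj : (companionMatrix n p) ^ (j : ℕ) *ᵥ Pi.single (⟨0, h0⟩ : Fin n) 1 = Pi.single j 1 := by
      simpa using comp_pow_mulVec p h0 j j.isLt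
    have hcomm : (Polynomial.aeval (companionMatrix n p) p) * (companionMatrix n p) ^ (j : ℕ)
        = (companionMatrix n p) ^ (j : ℕ) * Polynomial.aeval (companionMatrix n p) p := by
      have hX : (companionMatrix n p) ^ (j : ℕ)
          = Polynomial.aeval (companionMatrix n p) ((X : R[X]) ^ (j : ℕ)) := by
        rw [map_pow, Polynomial.aeval_X]
      rw [hX, ← _root_.map_mul, mul_comm, _root_.map_mul]
    rw [← hMj, Matrix.mulVec_mulVec, hcomm, ← Matrix.mulVec_mulVec, key,
      Matrix.mulVec_zero]
  ext i j
  simpa using congrFun (hcol j) i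

lemma aeval_matrix_map_s3 {D K : Type*} [CommRing D] [CommRing K] [Algebra D K] {n : ℕ}
    (A : Matrix (Fin n) (Fin n) D) (q : D[X]) :
    Polynomial.aeval (A.map (algebraMap D K)) (q.map (algebraMap D K))
      = (Polynomial.aeval A q).map (algebraMap D K) := by
  rw [Polynomial.aeval_map_algebraMap]
  exact Polynomial.aeval_algHom_apply ((Algebra.ofId D K).mapMatrix) A q

end Aux

/-- `Int_D(Mₙ(D)) = Int_D(𝒞ₙ, Mₙ(D))`: companion matrices of monic polynomials of
degree `n` form a polynomially dense subset of `Mₙ(D)`. -/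
theorem stmt_3 {D K : Type*} [CommRing D] [IsDomain D] [Field K] [Algebra D K]
    [IsFractionRing D K] (n : ℕ) (f : K[X]) :
    (∀ C : Matrix (Fin n) (Fin n) D, ∃ B : Matrix (Fin n) (Fin n) D,
        Polynomial.aeval (C.map (algebraMap D K)) f = B.map (algebraMap D K)) ↔
      (∀ p : D[X], p.Monic → p.natDegree = n →
        ∃ B : Matrix (Fin n) (Fin n) D,
          Polynomial.aeval ((companionMatrix n p).map (algebraMap D K)) f
            = B.map (algebraMap D K)) := by
  constructor
  · intro h p _ _
    exact h (companionMatrix n p)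
  · intro h A
    rcases Nat.eq_zero_or_pos n with h0 | h0
    · subst h0; exact ⟨0, Subsingleton.elim _ _⟩
    set φ := algebraMap D K with hφdef
    set χ := A.charpoly with hχ
    have hχm : χ.Monic := A.charpoly_monic
    have hχd : χ.natDegree = n := by
      rw [hχ, Matrix.charpoly_natDegree_eq_dim, Fintype.card_fin]
    obtain ⟨B, hB⟩ := h χ hχm hχd
    set q : K[X] := χ.map φ with hq
    have hqm : q.Monic := hχm.map φ
    have hqd : q.natDegree = n := by rw [hq, hχm.natDegree_map, hχd]
    set r : K[X] := f %ₘ q with hr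
    have hrd : r.natDegree < n := by
      rw [← hqd]
      exact Polynomial.natDegree_modByMonic_lt f hqm
        (fun h1 => by simp [h1] at hqd; omega)
    -- q vanishes at both matrices (over K)
    have hq_comp : Polynomial.aeval (companionMatrix n q) q = 0 :=
      aeval_companionMatrix_self q hqm hqd
    have hq_A : Polynomial.aeval (A.map φ) q = 0 := by
      rw [hq, aeval_matrix_map_s3, Matrix.aeval_self_charpoly]
      simp
    -- reduce f to r at both matrices
    have hfr_A : Polynomial.aeval (A.map φ) f = Polynomial.aeval (A.map φ) r := by
      conv_lhs => rw [← Polynomial.modByMonic_add_div f q]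
      rw [map_add, map_mul, hq_A, zero_mul, add_zero]
    have hfr_comp : Polynomial.aeval (companionMatrix n q) f
        = Polynomial.aeval (companionMatrix n q) r := by
      conv_lhs => rw [← Polynomial.modByMonic_add_div f q]
      rw [map_add, map_mul, hq_comp, zero_mul, add_zero]
    -- the value at the companion matrix is B.map φ
    have hBr : Polynomial.aeval (companionMatrix n q) r = B.map φ := by
      rw [← hfr_comp, ← companionMatrix_map φ χ]
      exact hB
    -- extract coefficients of r
    have hcoeff : ∀ i : Fin n, r.coeff (i : ℕ) = φ (B i ⟨0, h0⟩) := by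
      intro i
      have h1 := congrFun (aeval_comp_mulVec q h0 r hrd) i
      rw [hBr] at h1
      simpa using h1.symm
    set rD : D[X] := ∑ i : Fin n, Polynomial.monomial (i : ℕ) (B i ⟨0, h0⟩) with hrD
    have hrDmap : rD.map φ = r := by
      ext k
      rw [Polynomial.coeff_map, hrD, Polynomial.finset_sum_coeff]
      simp only [Polynomial.coeff_monomial]
      by_cases hk : k < n
      · rw [Finset.sum_eq_single (⟨k, hk⟩ : Fin n)]
        · rw [if_pos rfl, ← hcoeff ⟨k, hk⟩]
        · intro b _ hb
          exact if_neg (fun hbk => hb (by simpa [Fin.ext_iff] using hbk))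
        · intro hmem; exact absurd (Finset.mem_univ _) hmem
      · rw [Finset.sum_eq_zero (fun b _ => if_neg (fun hbk => hk (by have := b.isLt; omega)))]
        rw [map_zero]
        exact (Polynomial.coeff_eq_zero_of_natDegree_lt (by omega)).symm
    refine ⟨Polynomial.aeval A rD, ?_⟩
    rw [hfr_A, ← hrDmap, aeval_matrix_map_s3]
end

section
/- Let D be an integral domain with fraction field K such that the intersection of all maximal ideals of D of finite index is (0), and let ℐ_n ⊆ M_n(D) be the set of companion matrices of monic irreducible polynomials of degree n in D[x]. Then f ∈ K[x] maps every matrix in M_n(D) into M_n(D) if and only if f maps every matrix in ℐ_n into M_n(D). -/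
open Polynomial

section Aux

variable {D : Type*} [CommRing D] {n : ℕ}

lemma stmt4aux_companionMatrix_map {R : Type*} [CommRing R] (σ : D →+* R) (p : D[X]) :
    (companionMatrix n p).map σ = companionMatrix n (p.map σ) := by
  ext i j
  simp only [companionMatrix, Matrix.map_apply, Matrix.of_apply, apply_ite σ, map_one, map_zero,
    map_neg, coeff_map]

lemma stmt4aux_companion_pow_col (hn : 0 < n) (p : D[X]) :
    ∀ k, k < n → ∀ i : Fin n,
      ((companionMatrix n p) ^ k) i ⟨0, hn⟩ = if (i : ℕ) = k then 1 else 0 := by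
  intro k
  induction k with
  | zero =>
    intro _ i
    rw [pow_zero, Matrix.one_apply]
    simp [Fin.ext_iff]
  | succ k ih =>
    intro hk i
    have hk' : k < n := Nat.lt_of_succ_lt hk
    rw [pow_succ', Matrix.mul_apply]
    have hsum : ∀ l : Fin n, companionMatrix n p i l * ((companionMatrix n p) ^ k) l ⟨0, hn⟩
        = if l = (⟨k, hk'⟩ : Fin n) then companionMatrix n p i l else 0 := by
      intro l
      rw [ih hk' l]
      by_cases hl : (l : ℕ) = k
      · simp [hl, Fin.ext_iff]
      · simp [hl, Fin.ext_iff]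
    rw [Finset.sum_congr rfl (fun l _ => hsum l), Finset.sum_ite_eq' Finset.univ]
    simp only [Finset.mem_univ, if_true]
    show (if ((⟨k, hk'⟩ : Fin n) : ℕ) + 1 = (i : ℕ) then 1
      else if ((⟨k, hk'⟩ : Fin n) : ℕ) = n - 1 then -p.coeff (i : ℕ) else 0) = _
    have hval : ((⟨k, hk'⟩ : Fin n) : ℕ) = k := rfl
    rw [hval]
    by_cases hik : (i : ℕ) = k + 1
    · rw [if_pos (by omega), if_pos hik]
    · rw [if_neg (by omega), if_neg (by omega : ¬ k = n - 1), if_neg hik]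

lemma stmt4aux_companion_pow_n_col (hn : 0 < n) (p : D[X]) (i : Fin n) :
    ((companionMatrix n p) ^ n) i ⟨0, hn⟩ = -p.coeff (i : ℕ) := by
  have key : ∀ m, m + 1 = n → ((companionMatrix n p) ^ (m + 1)) i ⟨0, hn⟩ = -p.coeff (i : ℕ) := by
    intro m hm
    have hm' : m < n := by omega
    rw [pow_succ', Matrix.mul_apply]
    have hsum : ∀ l : Fin n, companionMatrix n p i l * ((companionMatrix n p) ^ m) l ⟨0, hn⟩
        = if l = (⟨m, hm'⟩ : Fin n) then companionMatrix n p i l else 0 := by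
      intro l
      rw [stmt4aux_companion_pow_col hn p m hm' l]
      by_cases hl : (l : ℕ) = m
      · simp [hl, Fin.ext_iff]
      · simp [hl, Fin.ext_iff]
    rw [Finset.sum_congr rfl (fun l _ => hsum l), Finset.sum_ite_eq' Finset.univ]
    simp only [Finset.mem_univ, if_true]
    show (if ((⟨m, hm'⟩ : Fin n) : ℕ) + 1 = (i : ℕ) then 1
      else if ((⟨m, hm'⟩ : Fin n) : ℕ) = n - 1 then -p.coeff (i : ℕ) else 0) = _
    have hval : ((⟨m, hm'⟩ : Fin n) : ℕ) = m := rfl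
    rw [hval, if_neg (by have := i.isLt; omega), if_pos (by omega)]
  have h := key (n - 1) (by omega)
  rwa [show n - 1 + 1 = n by omega] at h

lemma stmt4aux_companion_aeval_col (hn : 0 < n) (p h : D[X]) (hdeg : h.natDegree < n)
    (i : Fin n) :
    (aeval (companionMatrix n p) h) i ⟨0, hn⟩ = h.coeff (i : ℕ) := by
  rw [aeval_eq_sum_range' hdeg, Matrix.sum_apply]
  have hsum : ∀ k ∈ Finset.range n,
      (h.coeff k • (companionMatrix n p) ^ k) i ⟨0, hn⟩
        = if (i : ℕ) = k then h.coeff k else 0 := by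
    intro k hk
    rw [Matrix.smul_apply, stmt4aux_companion_pow_col hn p k (Finset.mem_range.mp hk) i,
      smul_eq_mul, mul_ite, mul_one, mul_zero]
  rw [Finset.sum_congr rfl hsum, Finset.sum_ite_eq (Finset.range n) (i : ℕ) h.coeff,
    if_pos (Finset.mem_range.mpr i.isLt)]

lemma stmt4aux_companion_aeval_self (hn : 0 < n) (p : D[X]) (hp : p.Monic)
    (hdeg : p.natDegree = n) :
    aeval (companionMatrix n p) p = 0 := by
  set C := companionMatrix n p with hC
  have hcol : ∀ i : Fin n, (aeval C p) i ⟨0, hn⟩ = 0 := by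
    intro i
    rw [aeval_eq_sum_range' (show p.natDegree < n + 1 by omega), Matrix.sum_apply,
      Finset.sum_range_succ]
    have hsum : ∀ k ∈ Finset.range n,
        (p.coeff k • C ^ k) i ⟨0, hn⟩ = if (i : ℕ) = k then p.coeff k else 0 := by
      intro k hk
      rw [Matrix.smul_apply, hC, stmt4aux_companion_pow_col hn p k (Finset.mem_range.mp hk) i,
        smul_eq_mul, mul_ite, mul_one, mul_zero]
    rw [Finset.sum_congr rfl hsum, Finset.sum_ite_eq (Finset.range n) (i : ℕ) p.coeff,
      if_pos (Finset.mem_range.mpr i.isLt), Matrix.smul_apply, hC,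
      stmt4aux_companion_pow_n_col hn p i]
    have hcn : p.coeff n = 1 := by
      rw [← hdeg]; exact hp.coeff_natDegree
    rw [hcn, one_smul]
    ring
  ext i j
  have hcomm : aeval C p * C ^ (j : ℕ) = C ^ (j : ℕ) * aeval C p := by
    have h1 : C ^ (j : ℕ) = aeval C ((X : D[X]) ^ (j : ℕ)) := by rw [map_pow, aeval_X]
    rw [h1, ← map_mul, mul_comm p ((X : D[X]) ^ (j : ℕ)), map_mul]
  have hleft : (aeval C p * C ^ (j : ℕ)) i ⟨0, hn⟩ = (aeval C p) i j := by
    rw [Matrix.mul_apply]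
    have hsum : ∀ l : Fin n, (aeval C p) i l * (C ^ (j : ℕ)) l ⟨0, hn⟩
        = if l = j then (aeval C p) i l else 0 := by
      intro l
      rw [hC, stmt4aux_companion_pow_col hn p (j : ℕ) j.isLt l]
      by_cases hl : (l : ℕ) = (j : ℕ)
      · simp [hl, Fin.ext_iff]
      · simp [hl, Fin.ext_iff]
    rw [Finset.sum_congr rfl (fun l _ => hsum l), Finset.sum_ite_eq' Finset.univ]
    simp
  have hright : (C ^ (j : ℕ) * aeval C p) i ⟨0, hn⟩ = 0 := by
    rw [Matrix.mul_apply]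
    apply Finset.sum_eq_zero
    intro l _
    rw [hcol l, mul_zero]
  have hz : (aeval C p) i j = 0 := by rw [← hleft, hcomm, hright]
  rw [hz, Matrix.zero_apply]

lemma stmt4aux_aeval_matrix_map {R : Type*} [CommRing R] (σ : D →+* R)
    (A : Matrix (Fin n) (Fin n) D) (g : D[X]) :
    (aeval A g).map σ = aeval (A.map σ) (g.map σ) := by
  classical
  rw [aeval_def, aeval_def, ← RingHom.mapMatrix_apply, hom_eval₂, eval₂_map]
  congr 1
  ext a : 1
  simp only [RingHom.comp_apply, RingHom.mapMatrix_apply]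
  ext i j
  simp [Matrix.algebraMap_matrix_apply, Matrix.map_apply, apply_ite σ]

lemma stmt4aux_sum_C_mul_X_pow_coeff (c : ℕ → D) (m j : ℕ) :
    (∑ k ∈ Finset.range m, Polynomial.C (c k) * X ^ k).coeff j
      = if j < m then c j else 0 := by
  rw [finset_sum_coeff]
  simp only [coeff_C_mul, coeff_X_pow, mul_ite, mul_one, mul_zero]
  rw [Finset.sum_ite_eq (Finset.range m) j c]
  simp [Finset.mem_range]

lemma stmt4aux_exists_monic_irreducible_finite_field (F : Type*) [Field F] [Finite F]
    (n : ℕ) (hn : 0 < n) : ∃ r : F[X], r.Monic ∧ r.natDegree = n ∧ Irreducible r := by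
  haveI : Fintype F := Fintype.ofFinite F
  set q := Fintype.card F with hq
  obtain ⟨m, hp, hcard⟩ := FiniteField.card F (ringChar F)
  haveI hfact : Fact (ringChar F).Prime := ⟨hp⟩
  have hq1 : 1 < q := Fintype.one_lt_card
  set g : F[X] := X ^ q ^ n - X with hg
  have hsep : g.Separable := by
    have hd : (ringChar F) ∣ q ^ n := by
      rw [hq, hcard]
      exact dvd_pow (dvd_pow_self _ m.ne_zero) hn.ne'
    exact galois_poly_separable (ringChar F) (q ^ n) hd
  set E := g.SplittingField
  haveI : Finite E := Module.finite_of_finite F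
  haveI : Fintype E := Fintype.ofFinite E
  haveI : CharP E (ringChar F) := charP_of_injective_algebraMap' F (A := E) (ringChar F)
  have hgnd : g.natDegree = q ^ n :=
    FiniteField.X_pow_card_pow_sub_X_natDegree_eq F hn.ne' hq1
  have hgne : g ≠ 0 := by
    intro h0
    rw [h0, natDegree_zero] at hgnd
    have : 0 < q ^ n := pow_pos (by omega) n
    omega
  have key : Fintype.card (g.rootSet E) = q ^ n := by
    rw [card_rootSet_eq_natDegree hsep (SplittingField.splits g), hgnd]
  have hqn : q ^ n = (ringChar F) ^ ((m : ℕ) * n) := by rw [pow_mul, ← hcard, hq]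
  set S : Subalgebra F E :=
    { carrier := {x : E | x ^ q ^ n = x}
      mul_mem' := fun {a b} ha hb => by
        simp only [Set.mem_setOf_eq] at *
        rw [mul_pow, ha, hb]
      one_mem' := by simp [Set.mem_setOf_eq]
      add_mem' := fun {a b} ha hb => by
        simp only [Set.mem_setOf_eq] at *
        rw [hqn, add_pow_char_pow, ← hqn, ha, hb]
      zero_mem' := by
        simp only [Set.mem_setOf_eq]
        exact zero_pow (pow_pos (Nat.lt_of_lt_of_le Nat.zero_lt_one hq1.le) n).ne'
      algebraMap_mem' := fun r => by
        simp only [Set.mem_setOf_eq]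
        rw [← map_pow, FiniteField.pow_card_pow] } with hS
  have hroot_mem : ∀ x : E, x ∈ g.rootSet E ↔ x ^ q ^ n = x := by
    intro x
    rw [mem_rootSet_of_ne hgne]
    have hx : (aeval x) g = x ^ q ^ n - x := by
      show (aeval x) (X ^ q ^ n - X) = _
      rw [map_sub, map_pow, aeval_X]
    rw [hx, sub_eq_zero]
  have hSTop : S = ⊤ := by
    rw [eq_top_iff, ← SplittingField.adjoin_rootSet g, Algebra.adjoin_le_iff]
    intro x hx
    exact (hroot_mem x).mp hx
  have huniv : g.rootSet E = Set.univ := by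
    rw [Set.eq_univ_iff_forall]
    intro x
    rw [hroot_mem]
    have hx : x ∈ S := hSTop ▸ Algebra.mem_top
    exact hx
  have e : g.rootSet E ≃ E := (Equiv.setCongr huniv).trans (Equiv.Set.univ E)
  have hcardE : Fintype.card E = q ^ n := by
    rw [← key]
    exact (Fintype.card_congr e).symm
  have hfinrank : Module.finrank F E = n := by
    have h2 := Module.card_eq_pow_finrank (K := F) (V := E)
    rw [hcardE] at h2
    exact (Nat.pow_right_injective hq1 h2.symm)
  obtain ⟨α, hα⟩ := Field.exists_primitive_element F E
  have hint : IsIntegral F α := IsIntegral.of_finite F α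
  refine ⟨minpoly F α, minpoly.monic hint, ?_, minpoly.irreducible hint⟩
  rw [(Field.primitive_element_iff_minpoly_natDegree_eq F α).mp hα, hfinrank]

end Aux

/-- If the intersection of the maximal ideals of finite index of `D` is `(0)`, then
`Int_D(Mₙ(D)) = Int_D(ℐₙ, Mₙ(D))`, where `ℐₙ` is the set of companion matrices of
monic irreducible polynomials of degree `n`. -/
theorem stmt_4 {D K : Type*} [CommRing D] [IsDomain D] [Field K] [Algebra D K]
    [IsFractionRing D K]
    (hrad : (⨅ P ∈ {P : Ideal D | P.IsMaximal ∧ Finite (D ⧸ P)}, P) = ⊥)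
    (n : ℕ) (hn : 0 < n) (f : K[X]) :
    (∀ C : Matrix (Fin n) (Fin n) D, ∃ B : Matrix (Fin n) (Fin n) D,
        Polynomial.aeval (C.map (algebraMap D K)) f = B.map (algebraMap D K)) ↔
      (∀ p : D[X], p.Monic → p.natDegree = n → Irreducible p →
        ∃ B : Matrix (Fin n) (Fin n) D,
          Polynomial.aeval ((companionMatrix n p).map (algebraMap D K)) f
            = B.map (algebraMap D K)) := by
  classical
  set φ := algebraMap D K with hφ
  have φinj : Function.Injective φ := IsFractionRing.injective D K
  constructor
  · intro hL p _ _ _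
    exact hL (companionMatrix n p)
  · intro hR A
    obtain ⟨d, hd⟩ := IsLocalization.integerNormalization_map_to_map (nonZeroDivisors D) f
    set g : D[X] := IsLocalization.integerNormalization (nonZeroDivisors D) f with hg
    have hdne : (d : D) ≠ 0 := nonZeroDivisors.ne_zero d.2
    have hdKne : φ (d : D) ≠ 0 := fun h0 => hdne (φinj (by rwa [map_zero]))
    have ident : ∀ M : Matrix (Fin n) (Fin n) D,
        (aeval M g).map φ = φ (d : D) • aeval (M.map φ) f := by
      intro M
      rw [stmt4aux_aeval_matrix_map φ M g, hd, ← algebraMap_smul K (d : D) f,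
        Polynomial.smul_eq_C_mul, map_mul, aeval_C, ← Algebra.smul_def]
    have mapsmul : ∀ X0 : Matrix (Fin n) (Fin n) D,
        ((d : D) • X0).map φ = φ (d : D) • X0.map φ := by
      intro X0
      ext i j
      simp [Matrix.map_apply, Matrix.smul_apply, smul_eq_mul]
    have bridge : ∀ M X0 : Matrix (Fin n) (Fin n) D,
        aeval M g = (d : D) • X0 → aeval (M.map φ) f = X0.map φ := by
      intro M X0 hMX
      have h1 := ident M
      rw [hMX, mapsmul X0] at h1
      ext i j
      have h4 := congrArg (fun N : Matrix (Fin n) (Fin n) K => N i j) h1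
      simp only [Matrix.smul_apply, smul_eq_mul] at h4
      exact (mul_left_cancel₀ hdKne h4).symm
    have bridge' : ∀ M X0 : Matrix (Fin n) (Fin n) D,
        aeval (M.map φ) f = X0.map φ → aeval M g = (d : D) • X0 := by
      intro M X0 hMX
      have h1 := ident M
      rw [hMX, ← mapsmul X0] at h1
      ext i j
      have h4 := congrArg (fun N : Matrix (Fin n) (Fin n) K => N i j) h1
      simp only [Matrix.map_apply] at h4
      exact φinj h4
    have claim1 : ∀ p : D[X], p.Monic → p.natDegree = n →
        ∃ B : Matrix (Fin n) (Fin n) D, aeval (companionMatrix n p) g = (d : D) • B := by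
      intro p hpmon hpdeg
      have hex : ∃ P : Ideal D, (P.IsMaximal ∧ Finite (D ⧸ P)) ∧ (d : D) ∉ P := by
        by_contra hcon
        push_neg at hcon
        have hmem : (d : D) ∈ (⨅ P ∈ {P : Ideal D | P.IsMaximal ∧ Finite (D ⧸ P)}, P) := by
          simp only [Ideal.mem_iInf]
          intro P hP
          exact hcon P hP
        rw [hrad] at hmem
        exact hdne (Ideal.mem_bot.mp hmem)
      obtain ⟨P, ⟨hPmax, hPfin⟩, hdP⟩ := hex
      haveI := hPmax
      haveI := hPfin
      letI : Field (D ⧸ P) := Ideal.Quotient.field P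
      obtain ⟨r, hrmon, hrdeg, hrirr⟩ :=
        stmt4aux_exists_monic_irreducible_finite_field (D ⧸ P) n hn
      obtain ⟨y, i0, hi0P, hyi⟩ := hPmax.exists_inv hdP
      choose s hs using fun k : ℕ => Ideal.Quotient.mk_surjective (I := P) (r.coeff k)
      set u : D := y * (d : D) with hu
      set w : D[X] := ∑ k ∈ Finset.range n, Polynomial.C (s k - p.coeff k) * X ^ k with hw
      set q : D[X] := p + Polynomial.C u * w with hqdef
      have hwcoeff : ∀ j : ℕ, w.coeff j = if j < n then s j - p.coeff j else 0 := fun j =>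
        stmt4aux_sum_C_mul_X_pow_coeff _ n j
      have hqcoeff : ∀ k : ℕ, q.coeff k = p.coeff k + u * w.coeff k := by
        intro k; rw [hqdef, coeff_add, coeff_C_mul]
      have hpcn : p.coeff n = 1 := by rw [← hpdeg]; exact hpmon.coeff_natDegree
      have hqcn : q.coeff n = 1 := by
        rw [hqcoeff, hwcoeff, if_neg (lt_irrefl n), mul_zero, add_zero, hpcn]
      have hqhigh : ∀ N, n < N → q.coeff N = 0 := by
        intro N hN
        rw [hqcoeff, hwcoeff, if_neg (by omega), mul_zero, add_zero]
        exact coeff_eq_zero_of_natDegree_lt (by omega)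
      have hqdegle : q.natDegree ≤ n := natDegree_le_iff_coeff_eq_zero.mpr hqhigh
      have hqdeg : q.natDegree = n :=
        le_antisymm hqdegle (le_natDegree_of_ne_zero (by rw [hqcn]; exact one_ne_zero))
      have hqmon : q.Monic := by
        have hlc : q.leadingCoeff = 1 := by rw [leadingCoeff, hqdeg, hqcn]
        exact hlc
      have hmku : Ideal.Quotient.mk P u = 1 := by
        rw [← map_one (Ideal.Quotient.mk P), Ideal.Quotient.mk_eq_mk_iff_sub_mem]
        have h5 : u - 1 = -i0 := by rw [hu, ← hyi]; ring
        rw [h5]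
        exact neg_mem hi0P
      have hqmap : q.map (Ideal.Quotient.mk P) = r := by
        ext k
        rw [coeff_map, hqcoeff, map_add, map_mul, hmku, one_mul, hwcoeff]
        by_cases hk : k < n
        · rw [if_pos hk, map_sub, hs k]
          ring
        · rw [if_neg hk, map_zero, add_zero]
          by_cases hk2 : k = n
          · rw [hk2, hpcn, map_one]
            have hr1 : r.coeff k = 1 := by
              rw [hk2, ← hrdeg]; exact hrmon.coeff_natDegree
            exact (hk2 ▸ hr1).symm
          · rw [coeff_eq_zero_of_natDegree_lt (show p.natDegree < k by omega), map_zero]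
            exact (coeff_eq_zero_of_natDegree_lt (show r.natDegree < k by omega)).symm
      have hqirr : Irreducible q :=
        Polynomial.Monic.irreducible_of_irreducible_map (Ideal.Quotient.mk P) q hqmon
          (by rw [hqmap]; exact hrirr)
      obtain ⟨B, hB⟩ := hR q hqmon hqdeg hqirr
      have hBq : aeval (companionMatrix n q) g = (d : D) • B := bridge' _ _ hB
      set π := Ideal.Quotient.mk (Ideal.span {(d : D)}) with hπ
      have hpq : p.map π = q.map π := by
        ext k
        rw [coeff_map, coeff_map, Ideal.Quotient.mk_eq_mk_iff_sub_mem, hqcoeff]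
        have h6 : p.coeff k - (p.coeff k + u * w.coeff k) = -(u * w.coeff k) := by ring
        rw [h6]
        apply neg_mem
        exact Ideal.mem_span_singleton'.mpr ⟨y * w.coeff k, by rw [hu]; ring⟩
      have hmapeq : (aeval (companionMatrix n p) g).map π
          = (aeval (companionMatrix n q) g).map π := by
        rw [stmt4aux_aeval_matrix_map π _ g, stmt4aux_aeval_matrix_map π _ g,
          stmt4aux_companionMatrix_map π p, stmt4aux_companionMatrix_map π q, hpq]
      have hmem : ∀ i j, (aeval (companionMatrix n p) g) i j
          - (aeval (companionMatrix n q) g) i j ∈ Ideal.span {(d : D)} := by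
        intro i j
        rw [← Ideal.Quotient.mk_eq_mk_iff_sub_mem]
        have h4 := congrArg
          (fun N : Matrix (Fin n) (Fin n) (D ⧸ Ideal.span {(d : D)}) => N i j) hmapeq
        simpa [Matrix.map_apply] using h4
      choose e he using fun i j => Ideal.mem_span_singleton'.mp (hmem i j)
      refine ⟨B + Matrix.of e, ?_⟩
      ext i j
      have h5 := he i j
      have h6 : (aeval (companionMatrix n q) g) i j = (d : D) * B i j := by
        rw [hBq]; simp [Matrix.smul_apply, smul_eq_mul]
      have h7 : (aeval (companionMatrix n p) g) i j
          = e i j * (d : D) + (aeval (companionMatrix n q) g) i j := by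
        rw [h5]; ring
      simp only [Matrix.smul_apply, Matrix.add_apply, Matrix.of_apply, smul_eq_mul]
      rw [h7, h6]; ring
    set χ := A.charpoly with hχ
    have hχmon : χ.Monic := A.charpoly_monic
    have hχdeg : χ.natDegree = n := by
      rw [hχ, Matrix.charpoly_natDegree_eq_dim]; exact Fintype.card_fin n
    obtain ⟨B, hB⟩ := claim1 χ hχmon hχdeg
    have hmod : aeval (companionMatrix n χ) (g %ₘ χ) = (d : D) • B := by
      rw [← hB]
      conv_rhs => rw [← modByMonic_add_div g χ]
      rw [map_add, map_mul, stmt4aux_companion_aeval_self hn χ hχmon hχdeg, zero_mul, add_zero]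
    have hhdeg : (g %ₘ χ).natDegree < n := by
      by_cases h0 : g %ₘ χ = 0
      · rw [h0, natDegree_zero]; exact hn
      · have hlt := degree_modByMonic_lt g hχmon
        have h8 := natDegree_lt_natDegree h0 hlt
        omega
    have hcoeff : ∀ i : Fin n, (g %ₘ χ).coeff (i : ℕ) = (d : D) * B i ⟨0, hn⟩ := by
      intro i
      rw [← stmt4aux_companion_aeval_col hn χ (g %ₘ χ) hhdeg i, hmod, Matrix.smul_apply,
        smul_eq_mul]
    set c : ℕ → D := fun k => if hk : k < n then B ⟨k, hk⟩ ⟨0, hn⟩ else 0 with hc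
    set h' : D[X] := ∑ k ∈ Finset.range n, Polynomial.C (c k) * X ^ k with hh'
    have hmodeq : g %ₘ χ = Polynomial.C (d : D) * h' := by
      ext k
      rw [coeff_C_mul, hh', stmt4aux_sum_C_mul_X_pow_coeff]
      by_cases hk : k < n
      · rw [if_pos hk, hc]
        simp only [dif_pos hk]
        exact hcoeff ⟨k, hk⟩
      · rw [if_neg hk, mul_zero]
        exact coeff_eq_zero_of_natDegree_lt (by omega)
    refine ⟨aeval A h', bridge A (aeval A h') ?_⟩
    conv_lhs => rw [← modByMonic_add_div g χ]
    rw [map_add, map_mul, hχ, Matrix.aeval_self_charpoly, zero_mul, add_zero, hmodeq, map_mul,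
      aeval_C, ← Algebra.smul_def]
end

section
/- Let D be an integral domain with fraction field K, C ∈ M_n(D), and f = g/d ∈ Int_D(M_n(D)) with g ∈ D[x], d ∈ D \ {0}. Then there exists r ∈ D[x] with deg r < n such that f(C) = r(C). -/
open Polynomial

namespace Stmt7Aux

variable {R : Type*} [CommRing R] {n : ℕ}

/-- Companion matrix of a polynomial (last column is `-p.coeff i`). -/
def comp (n : ℕ) (p : R[X]) : Matrix (Fin n) (Fin n) R :=
  Matrix.of fun i j => if (j : ℕ) + 1 = n then -p.coeff i
    else if (i : ℕ) = (j : ℕ) + 1 then 1 else 0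

lemma comp_mulVec_single (p : R[X]) (j : Fin n) :
    (comp n p).mulVec (Pi.single j 1) = fun i => comp n p i j := by
  funext i
  simp [Matrix.mulVec_single]

lemma comp_mulVec_single_of_lt (p : R[X]) (j : Fin n) (h : (j : ℕ) + 1 < n) :
    (comp n p).mulVec (Pi.single j 1) = Pi.single (⟨(j : ℕ) + 1, h⟩ : Fin n) 1 := by
  rw [comp_mulVec_single]
  funext i
  rw [Pi.single_apply]
  simp only [comp, Matrix.of_apply, if_neg h.ne, Fin.ext_iff]

lemma comp_mulVec_single_last (p : R[X]) (j : Fin n) (h : (j : ℕ) + 1 = n) :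
    (comp n p).mulVec (Pi.single j 1) = fun i : Fin n => -p.coeff (i : ℕ) := by
  rw [comp_mulVec_single]
  funext i
  simp [comp, h]

lemma comp_pow_mulVec (p : R[X]) (hn : 0 < n) :
    ∀ k, (hk : k < n) → ((comp n p) ^ k).mulVec (Pi.single (⟨0, hn⟩ : Fin n) 1)
      = Pi.single (⟨k, hk⟩ : Fin n) 1 := by
  intro k
  induction k with
  | zero => intro hk; rw [pow_zero, Matrix.one_mulVec]
  | succ k ih =>
      intro hk
      have hk' : k < n := Nat.lt_of_succ_lt hk
      rw [pow_succ', ← Matrix.mulVec_mulVec, ih hk',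
        comp_mulVec_single_of_lt p ⟨k, hk'⟩ hk]

lemma aeval_comp_mulVec (p : R[X]) (hn : 0 < n) (s : R[X]) (hs : s.natDegree < n) :
    (Polynomial.aeval (comp n p) s).mulVec (Pi.single (⟨0, hn⟩ : Fin n) 1)
      = fun i : Fin n => s.coeff (i : ℕ) := by
  rw [Polynomial.aeval_eq_sum_range' hs,
    ← Fin.sum_univ_eq_sum_range (fun i => s.coeff i • (comp n p) ^ i) n]
  have hsum : ∀ {ι : Type} (t : Finset ι) (F : ι → Matrix (Fin n) (Fin n) R)
      (v : Fin n → R), (∑ k ∈ t, F k).mulVec v = ∑ k ∈ t, (F k).mulVec v := by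
    intro ι t F v
    exact map_sum (AddMonoidHom.mk' (fun M : Matrix (Fin n) (Fin n) R => M.mulVec v)
      (fun A B => Matrix.add_mulVec A B v)) F t
  rw [hsum]
  funext i
  rw [Finset.sum_apply]
  have : ∀ k : Fin n, ((s.coeff (k : ℕ) • comp n p ^ (k : ℕ)).mulVec
      (Pi.single (⟨0, hn⟩ : Fin n) 1)) i = if i = k then s.coeff (k : ℕ) else 0 := by
    intro k
    rw [Matrix.smul_mulVec, Pi.smul_apply, comp_pow_mulVec p hn (k : ℕ) k.2,
      smul_eq_mul]
    have : (⟨(k : ℕ), k.2⟩ : Fin n) = k := rfl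
    rw [this, Pi.single_apply]
    split <;> simp
  rw [Finset.sum_congr rfl fun k _ => this k]
  simp

end Stmt7Aux

namespace Stmt7Aux

variable {R : Type*} [CommRing R] {n : ℕ}

lemma aeval_comp_self [Nontrivial R] (p : R[X]) (hp : p.Monic) (hn : 0 < n) (hpn : p.natDegree = n) :
    Polynomial.aeval (comp n p) p = 0 := by
  set A := comp n p with hA
  have hq : (p - X ^ n).natDegree < n := by
    rcases eq_or_ne (p - X ^ n) 0 with h | h
    · simpa [h] using hn
    · refine (Polynomial.natDegree_lt_iff_degree_lt h).2 ?_
      have hdeg : p.degree = (X ^ n : R[X]).degree := by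
        rw [Polynomial.degree_X_pow, Polynomial.degree_eq_natDegree hp.ne_zero, hpn]
      have := Polynomial.degree_sub_lt hdeg hp.ne_zero
        (by rw [hp.leadingCoeff, Polynomial.leadingCoeff_X_pow])
      rwa [Polynomial.degree_eq_natDegree hp.ne_zero, hpn] at this
  have hpow : (A ^ n).mulVec (Pi.single (⟨0, hn⟩ : Fin n) 1)
      = fun i : Fin n => -p.coeff (i : ℕ) := by
    have h1 : A ^ n = A * A ^ (n - 1) := by
      rw [← pow_succ']
      congr 1
      omega
    rw [h1, ← Matrix.mulVec_mulVec,
      comp_pow_mulVec p hn (n - 1) (by omega),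
      comp_mulVec_single_last p ⟨n - 1, by omega⟩ (by simp; omega)]
  have h0 : (Polynomial.aeval A p).mulVec (Pi.single (⟨0, hn⟩ : Fin n) 1) = 0 := by
    have hsplit : p = (p - X ^ n) + X ^ n := by ring
    have : Polynomial.aeval A p = Polynomial.aeval A (p - X ^ n) + A ^ n := by
      conv_lhs => rw [hsplit]
      rw [map_add, map_pow, Polynomial.aeval_X]
    rw [this, Matrix.add_mulVec, aeval_comp_mulVec p hn _ hq, hpow]
    funext i
    have hlt : (i : ℕ) < n := i.2
    simp only [Pi.add_apply, Pi.zero_apply, Polynomial.coeff_sub, Polynomial.coeff_X_pow,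
      if_neg (Nat.ne_of_lt hlt)]
    ring
  have hall : ∀ j : Fin n, (Polynomial.aeval A p).mulVec (Pi.single j 1) = 0 := by
    intro j
    have hsingle : (Pi.single j (1 : R) : Fin n → R)
        = (A ^ (j : ℕ)).mulVec (Pi.single (⟨0, hn⟩ : Fin n) 1) :=
      (comp_pow_mulVec p hn (j : ℕ) j.2).symm
    have hcomm : Polynomial.aeval A p * A ^ (j : ℕ) = A ^ (j : ℕ) * Polynomial.aeval A p := by
      have h1 : A ^ (j : ℕ) = Polynomial.aeval A ((X : R[X]) ^ (j : ℕ)) := by simp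
      rw [h1, ← map_mul, ← map_mul, mul_comm]
    rw [hsingle, Matrix.mulVec_mulVec, hcomm, ← Matrix.mulVec_mulVec, h0, Matrix.mulVec_zero]
  ext i j
  have h2 := hall j
  rw [Matrix.mulVec_single] at h2
  have := congrFun h2 i
  simpa using this

end Stmt7Aux

/-- For `f = g/d ∈ Int_D(Mₙ(D))` and `C ∈ Mₙ(D)` there is `r ∈ D[x]` with
`deg r < n` and `f(C) = r(C)`. -/
theorem stmt_7 {D K : Type*} [CommRing D] [IsDomain D] [Field K] [Algebra D K]
    [IsFractionRing D K] (n : ℕ) (C : Matrix (Fin n) (Fin n) D)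
    (g : D[X]) (d : D) (hd : d ≠ 0)
    (f : K[X]) (hf : f = Polynomial.C ((algebraMap D K d)⁻¹) * g.map (algebraMap D K))
    (hint : ∀ A : Matrix (Fin n) (Fin n) D, ∃ B : Matrix (Fin n) (Fin n) D,
        Polynomial.aeval (A.map (algebraMap D K)) f = B.map (algebraMap D K)) :
    ∃ r : D[X], r.degree < n ∧
      Polynomial.aeval (C.map (algebraMap D K)) f
        = (Polynomial.aeval C r).map (algebraMap D K) := by
  rcases Nat.eq_zero_or_pos n with hn0 | hn
  · refine ⟨0, ?_, ?_⟩
    · rw [Polynomial.degree_zero]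
      exact_mod_cast WithBot.bot_lt_coe n
    · subst hn0
      apply Matrix.ext
      intro i
      exact i.elim0
  · set φ := algebraMap D K with hφ
    have hinj : Function.Injective φ := IsFractionRing.injective D K
    have hφd : φ d ≠ 0 := fun h => hd (hinj (by rw [h, map_zero]))
    set p := C.charpoly with hpdef
    have hp : p.Monic := C.charpoly_monic
    have hpn : p.natDegree = n := by
      rw [hpdef, Matrix.charpoly_natDegree_eq_dim, Fintype.card_fin]
    set s := g %ₘ p with hsdef
    have hgs : g %ₘ p + p * (g /ₘ p) = g := Polynomial.modByMonic_add_div g p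
    have hsde : s.degree < (n : WithBot ℕ) := by
      have := Polynomial.degree_modByMonic_lt g hp
      rwa [Polynomial.degree_eq_natDegree hp.ne_zero, hpn] at this
    have hsn : s.natDegree < n := by
      rcases eq_or_ne s 0 with h | h
      · simpa [h] using hn
      · exact (Polynomial.natDegree_lt_iff_degree_lt h).2 hsde
    have key : ∀ M : Matrix (Fin n) (Fin n) D, Polynomial.aeval M p = 0 →
        Polynomial.aeval M g = Polynomial.aeval M s := by
      intro M hM
      conv_lhs => rw [← hgs]
      rw [map_add, map_mul, hM, zero_mul, add_zero]
    have hmapaeval : ∀ (M : Matrix (Fin n) (Fin n) D) (q : D[X]),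
        Polynomial.aeval (M.map φ) (q.map φ) = (Polynomial.aeval M q).map φ := by
      intro M q
      rw [hφ, Polynomial.aeval_map_algebraMap]
      have h1 : (M.map φ) = (AlgHom.mapMatrix (Algebra.ofId D K)) M := rfl
      rw [h1, Polynomial.aeval_algHom_apply]
      rfl
    have hfval : ∀ M : Matrix (Fin n) (Fin n) D,
        Polynomial.aeval (M.map φ) f = (φ d)⁻¹ • (Polynomial.aeval M g).map φ := by
      intro M
      rw [hf, map_mul, Polynomial.aeval_C, hmapaeval, ← Algebra.smul_def]
    set A := Stmt7Aux.comp n p with hAdef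
    obtain ⟨B, hB⟩ := hint A
    have hApz : Polynomial.aeval A p = 0 := Stmt7Aux.aeval_comp_self p hp hn hpn
    have hBs : (φ d)⁻¹ • (Polynomial.aeval A s).map φ = B.map φ := by
      rw [← hB, hfval A, key A hApz]
    have hcol : ∀ i : Fin n, (Polynomial.aeval A s) i ⟨0, hn⟩ = s.coeff (i : ℕ) := by
      intro i
      have h2 := congrFun (Stmt7Aux.aeval_comp_mulVec p hn s hsn) i
      rw [Matrix.mulVec_single] at h2
      simpa using h2
    have hcoeff : ∀ i : Fin n, (φ d)⁻¹ * φ (s.coeff (i : ℕ)) = φ (B i ⟨0, hn⟩) := by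
      intro i
      have h1 := congrFun (congrFun hBs i) ⟨0, hn⟩
      simpa [Matrix.smul_apply, Matrix.map_apply, smul_eq_mul, hcol i] using h1
    have hds : ∀ i : Fin n, s.coeff (i : ℕ) = d * B i ⟨0, hn⟩ := by
      intro i
      apply hinj
      rw [map_mul, ← hcoeff i, ← mul_assoc, mul_inv_cancel₀ hφd, one_mul]
    have hdvd : Polynomial.C d ∣ s := by
      rw [Polynomial.C_dvd_iff_dvd_coeff]
      intro k
      by_cases hk : k < n
      · exact ⟨B ⟨k, hk⟩ ⟨0, hn⟩, hds ⟨k, hk⟩⟩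
      · rw [Polynomial.coeff_eq_zero_of_degree_lt
          (lt_of_lt_of_le hsde (by exact_mod_cast Nat.le_of_not_lt hk))]
        exact dvd_zero d
    obtain ⟨r, hr⟩ := hdvd
    have hrdeg : r.degree < (n : WithBot ℕ) := by
      have hds' : s.degree = r.degree := by
        rw [hr, Polynomial.degree_mul, Polynomial.degree_C hd, zero_add]
      rw [← hds']
      exact hsde
    refine ⟨r, hrdeg, ?_⟩
    have hCp : Polynomial.aeval C p = 0 := C.aeval_self_charpoly
    rw [hfval C, key C hCp, hr, map_mul, Polynomial.aeval_C]
    have hmapsmul : (algebraMap D (Matrix (Fin n) (Fin n) D) d * Polynomial.aeval C r).map φ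
        = φ d • (Polynomial.aeval C r).map φ := by
      have h3 : (algebraMap D (Matrix (Fin n) (Fin n) D)) d * Polynomial.aeval C r
          = d • Polynomial.aeval C r := (Algebra.smul_def d _).symm
      rw [h3]
      ext i j
      simp [Matrix.map_apply, Matrix.smul_apply, smul_eq_mul, map_mul]
    rw [hmapsmul, smul_smul, inv_mul_cancel₀ hφd, one_smul]
end

section
/- Let D be an integral domain with fraction field K. The set Int_D[M_n(D)] = {f ∈ M_n(K)[x] : f(C) ∈ M_n(D) for all C ∈ M_n(D)}, where evaluation substitutes C on the right of the coefficients (f(C) = Σ a_k C^k), is closed under multiplication of polynomials, hence is a subring of M_n(K)[x] containing M_n(D)[x]. -/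
open Polynomial Finset Matrix

section aux

variable {S : Type*} [Ring S]

/-- eval of a product in a noncommutative ring. -/
theorem eval_mul_eq_sum (f g : S[X]) (A : S) :
    (f * g).eval A = ∑ i ∈ range (f.natDegree + 1), f.coeff i * g.eval A * A ^ i := by
  conv_lhs => rw [f.as_sum_range, Finset.sum_mul, eval_finset_sum]
  refine Finset.sum_congr rfl fun i _ => ?_
  rw [← C_mul_X_pow_eq_monomial, mul_assoc, X_pow_mul, eval_C_mul, eval_mul_X_pow, mul_assoc]

end aux

section key

variable {D K : Type*} [CommRing D] [Field K] [Algebra D K] {n : ℕ}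

/-- entrywise map on matrices as a ring hom -/
def ψm (D K : Type*) [CommRing D] [CommRing K] [Algebra D K] (n : ℕ) :
    Matrix (Fin n) (Fin n) D →+* Matrix (Fin n) (Fin n) K :=
  (algebraMap D K).mapMatrix


def good (f : Polynomial (Matrix (Fin n) (Fin n) K)) (C B : Matrix (Fin n) (Fin n) D) : Prop :=
  ∑ i ∈ Finset.range (f.natDegree + 1),
      f.coeff i * ((ψm D K n) B) * ((C.map (algebraMap D K)) ^ i) ∈ (ψm D K n).range

variable (f : Polynomial (Matrix (Fin n) (Fin n) K)) (C : Matrix (Fin n) (Fin n) D)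

theorem good_zero : good f C 0 := by
  unfold good
  simp only [map_zero, mul_zero, zero_mul, Finset.sum_const_zero]
  exact zero_mem _

theorem good_add {B₁ B₂ : Matrix (Fin n) (Fin n) D} (h₁ : good f C B₁) (h₂ : good f C B₂) :
    good f C (B₁ + B₂) := by
  unfold good at *
  simp only [map_add, mul_add, add_mul, Finset.sum_add_distrib]
  exact add_mem h₁ h₂

theorem good_neg {B : Matrix (Fin n) (Fin n) D} (h : good f C B) : good f C (-B) := by
  unfold good at *
  simp only [map_neg, mul_neg, neg_mul, Finset.sum_neg_distrib]
  exact neg_mem h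

theorem good_sub {B₁ B₂ : Matrix (Fin n) (Fin n) D} (h₁ : good f C B₁) (h₂ : good f C B₂) :
    good f C (B₁ - B₂) := by
  rw [sub_eq_add_neg]
  exact good_add f C h₁ (good_neg f C h₂)

theorem conj_pow_of_mul_eq_one {S : Type*} [Ring S] {u v x : S}
    (h1 : u * v = 1) (h2 : v * u = 1) (i : ℕ) : (u * x * v) ^ i = u * x ^ i * v := by
  induction i with
  | zero => rw [pow_zero, pow_zero, mul_one, h1]
  | succ m ih =>
      rw [pow_succ, pow_succ, ih]
      simp only [mul_assoc]
      rw [← mul_assoc v u, h2, one_mul]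

theorem good_of_inv
    (hf : ∀ C : Matrix (Fin n) (Fin n) D,
      f.eval (C.map (algebraMap D K)) ∈ (ψm D K n).range)
    {V Vi : Matrix (Fin n) (Fin n) D} (h1 : V * Vi = 1) (h2 : Vi * V = 1) :
    good f C V := by
  unfold good
  set ψ := ψm D K n with hψ
  have hK1 : ψ V * ψ Vi = 1 := by rw [← _root_.map_mul, h1, _root_.map_one]
  have hK2 : ψ Vi * ψ V = 1 := by rw [← _root_.map_mul, h2, _root_.map_one]
  have hU := hf (V * C * Vi)
  have hmap : ((V * C * Vi : Matrix (Fin n) (Fin n) D)).map (algebraMap D K)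
      = ψ V * (C.map (algebraMap D K)) * ψ Vi := by
    show ψ (V * C * Vi) = _
    rw [_root_.map_mul, _root_.map_mul]; rfl
  rw [hmap, eval_eq_sum_range] at hU
  have hmem : (∑ i ∈ Finset.range (f.natDegree + 1),
      f.coeff i * (ψ V * (C.map (algebraMap D K)) * ψ Vi) ^ i) * ψ V ∈ (ψm D K n).range :=
    mul_mem hU ⟨V, rfl⟩
  have heq : (∑ i ∈ Finset.range (f.natDegree + 1),
      f.coeff i * (ψ V * (C.map (algebraMap D K)) * ψ Vi) ^ i) * ψ V
      = ∑ i ∈ Finset.range (f.natDegree + 1),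
          f.coeff i * ψ V * (C.map (algebraMap D K)) ^ i := by
    rw [Finset.sum_mul]
    refine Finset.sum_congr rfl fun i _ => ?_
    rw [conj_pow_of_mul_eq_one hK1 hK2]
    simp only [mul_assoc]
    rw [hK2, mul_one]
  rwa [heq] at hmem

theorem good_transvection
    (hf : ∀ C : Matrix (Fin n) (Fin n) D,
      f.eval (C.map (algebraMap D K)) ∈ (ψm D K n).range)
    {k l : Fin n} (hkl : k ≠ l) (b : D) : good f C (transvection k l b) :=
  good_of_inv f C hf
    (by rw [transvection_mul_transvection_same _ _ hkl, add_neg_cancel, transvection_zero])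
    (by rw [transvection_mul_transvection_same _ _ hkl, neg_add_cancel, transvection_zero])

theorem good_one
    (hf : ∀ C : Matrix (Fin n) (Fin n) D,
      f.eval (C.map (algebraMap D K)) ∈ (ψm D K n).range) : good f C 1 :=
  good_of_inv f C hf (one_mul 1) (one_mul 1)

theorem good_off
    (hf : ∀ C : Matrix (Fin n) (Fin n) D,
      f.eval (C.map (algebraMap D K)) ∈ (ψm D K n).range)
    {k l : Fin n} (hkl : k ≠ l) (b : D) : good f C (single k l b) := by
  have h : single k l b = transvection k l b - 1 := by
    rw [transvection, add_sub_cancel_left]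
  rw [h]
  exact good_sub f C (good_transvection f C hf hkl b) (good_one f C hf)

theorem good_diag
    (hf : ∀ C : Matrix (Fin n) (Fin n) D,
      f.eval (C.map (algebraMap D K)) ∈ (ψm D K n).range)
    {k l : Fin n} (hkl : k ≠ l) (b : D) : good f C (single k k b) := by
  have hlk : l ≠ k := hkl.symm
  have hU : good f C (transvection k l b * transvection l k 1) := by
    refine good_of_inv f C hf (Vi := transvection l k (-1) * transvection k l (-b)) ?_ ?_
    · rw [mul_assoc, ← mul_assoc (transvection l k 1),
        transvection_mul_transvection_same _ _ hlk, add_neg_cancel, transvection_zero, one_mul,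
        transvection_mul_transvection_same _ _ hkl, add_neg_cancel, transvection_zero]
    · rw [mul_assoc, ← mul_assoc (transvection k l (-b)),
        transvection_mul_transvection_same _ _ hkl, neg_add_cancel, transvection_zero, one_mul,
        transvection_mul_transvection_same _ _ hlk, neg_add_cancel, transvection_zero]
  have hprod : transvection k l b * transvection l k 1
      = 1 + single l k 1 + single k l b + single k k b := by
    simp only [transvection, add_mul, mul_add, mul_one, one_mul, single_mul_single_same]
    abel
  rw [hprod] at hU
  have h1 : good f C (1 + single l k 1 + single k l b + single k k b
      - 1 - single l k 1 - single k l b) :=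
    good_sub f C (good_sub f C (good_sub f C hU (good_one f C hf))
      (good_off f C hf hlk 1)) (good_off f C hf hkl b)
  have h2 : (1 + single l k 1 + single k l b + single k k b
      - 1 - single l k 1 - single k l b) = single k k b := by abel
  rwa [h2] at h1

theorem good_all
    (hf : ∀ C : Matrix (Fin n) (Fin n) D,
      f.eval (C.map (algebraMap D K)) ∈ (ψm D K n).range)
    (B : Matrix (Fin n) (Fin n) D) : good f C B := by
  rcases le_or_gt n 1 with hn | hn
  · -- commutative case
    have hcomm : ∀ A A' : Matrix (Fin n) (Fin n) K, A * A' = A' * A := by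
      intro A A'
      ext i j
      interval_cases n
      · exact absurd i.2 (by omega)
      · have hi : i = 0 := Subsingleton.elim _ _
        have hj : j = 0 := Subsingleton.elim _ _
        subst hi; subst hj
        simp [Matrix.mul_apply, Fin.sum_univ_one, mul_comm]
    unfold good
    have heq : (∑ i ∈ Finset.range (f.natDegree + 1),
        f.coeff i * ((ψm D K n) B) * ((C.map (algebraMap D K)) ^ i))
        = f.eval (C.map (algebraMap D K)) * (ψm D K n) B := by
      rw [eval_eq_sum_range, Finset.sum_mul]
      refine Finset.sum_congr rfl fun i _ => ?_
      rw [mul_assoc, mul_assoc, hcomm ((ψm D K n) B) ((C.map (algebraMap D K)) ^ i)]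
    rw [heq]
    exact mul_mem (hf C) ⟨B, rfl⟩
  · have hne : ∀ k : Fin n, ∃ l : Fin n, l ≠ k := by
      intro k
      rcases eq_or_ne k ⟨0, by omega⟩ with h | h
      · exact ⟨⟨1, by omega⟩, by simp [h, Fin.ext_iff]⟩
      · exact ⟨⟨0, by omega⟩, Ne.symm h⟩
    rw [matrix_eq_sum_single B]
    refine Finset.sum_induction _ (good f C) (fun _ _ => good_add f C) (good_zero f C)
      fun i _ => ?_
    refine Finset.sum_induction _ (good f C) (fun _ _ => good_add f C) (good_zero f C)
      fun j _ => ?_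
    by_cases hij : i = j
    · subst hij
      obtain ⟨l, hlk⟩ := hne i
      exact good_diag f C hf hlk.symm (B i i)
    · exact good_off f C hf hij (B i j)

theorem key
    (hf : ∀ C : Matrix (Fin n) (Fin n) D,
      f.eval (C.map (algebraMap D K)) ∈ (ψm D K n).range)
    (B : Matrix (Fin n) (Fin n) D) :
    ∑ i ∈ Finset.range (f.natDegree + 1),
        f.coeff i * (B.map (algebraMap D K)) * (C.map (algebraMap D K)) ^ i
      ∈ (ψm D K n).range :=
  good_all f C hf B

end key


/-- Werner: the set `Int_D[Mₙ(D)]` of polynomials with coefficients in `Mₙ(K)`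
mapping `Mₙ(D)` to `Mₙ(D)` (evaluation `f(C) = Σ aₖ Cᵏ`) is closed under
multiplication, hence is a subring of `Mₙ(K)[x]` containing `Mₙ(D)[x]`. -/
theorem stmt_14 {D K : Type*} [CommRing D] [IsDomain D] [Field K] [Algebra D K]
    [IsFractionRing D K] (n : ℕ) :
    (∀ f g : Polynomial (Matrix (Fin n) (Fin n) K),
      f ∈ {f : Polynomial (Matrix (Fin n) (Fin n) K) |
            ∀ C : Matrix (Fin n) (Fin n) D, ∃ B : Matrix (Fin n) (Fin n) D,
              f.eval (C.map (algebraMap D K)) = B.map (algebraMap D K)} →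
      g ∈ {f : Polynomial (Matrix (Fin n) (Fin n) K) |
            ∀ C : Matrix (Fin n) (Fin n) D, ∃ B : Matrix (Fin n) (Fin n) D,
              f.eval (C.map (algebraMap D K)) = B.map (algebraMap D K)} →
      f * g ∈ {f : Polynomial (Matrix (Fin n) (Fin n) K) |
            ∀ C : Matrix (Fin n) (Fin n) D, ∃ B : Matrix (Fin n) (Fin n) D,
              f.eval (C.map (algebraMap D K)) = B.map (algebraMap D K)}) ∧
    (∃ R : Subring (Polynomial (Matrix (Fin n) (Fin n) K)),
      (R : Set (Polynomial (Matrix (Fin n) (Fin n) K))) =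
        {f : Polynomial (Matrix (Fin n) (Fin n) K) |
          ∀ C : Matrix (Fin n) (Fin n) D, ∃ B : Matrix (Fin n) (Fin n) D,
            f.eval (C.map (algebraMap D K)) = B.map (algebraMap D K)} ∧
      ∀ p : Polynomial (Matrix (Fin n) (Fin n) D),
        p.map ((algebraMap D K).mapMatrix) ∈ R) := by
  have hmul : ∀ f g : Polynomial (Matrix (Fin n) (Fin n) K),
      (∀ C : Matrix (Fin n) (Fin n) D, ∃ B : Matrix (Fin n) (Fin n) D,
        f.eval (C.map (algebraMap D K)) = B.map (algebraMap D K)) →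
      (∀ C : Matrix (Fin n) (Fin n) D, ∃ B : Matrix (Fin n) (Fin n) D,
        g.eval (C.map (algebraMap D K)) = B.map (algebraMap D K)) →
      ∀ C : Matrix (Fin n) (Fin n) D, ∃ B : Matrix (Fin n) (Fin n) D,
        (f * g).eval (C.map (algebraMap D K)) = B.map (algebraMap D K) := by
    intro f g hf hg C
    have hf' : ∀ C : Matrix (Fin n) (Fin n) D,
        f.eval (C.map (algebraMap D K)) ∈ (ψm D K n).range := by
      intro C'
      obtain ⟨B, hB⟩ := hf C'
      exact ⟨B, hB.symm⟩
    obtain ⟨Bg, hBg⟩ := hg C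
    have h := key f C hf' Bg
    obtain ⟨B, hB⟩ := h
    refine ⟨B, ?_⟩
    rw [eval_mul_eq_sum, hBg, ← hB]
    rfl
  constructor
  · exact fun f g hf hg => hmul f g hf hg
  · refine ⟨{
      carrier := {f : Polynomial (Matrix (Fin n) (Fin n) K) |
        ∀ C : Matrix (Fin n) (Fin n) D, ∃ B : Matrix (Fin n) (Fin n) D,
          f.eval (C.map (algebraMap D K)) = B.map (algebraMap D K)}
      mul_mem' := fun hf hg => hmul _ _ hf hg
      one_mem' := fun C => ⟨1, by
        rw [eval_one]
        exact (_root_.map_one (ψm D K n)).symm⟩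
      add_mem' := fun {a b} ha hb C => by
        obtain ⟨B₁, h₁⟩ := ha C
        obtain ⟨B₂, h₂⟩ := hb C
        exact ⟨B₁ + B₂, by
          rw [eval_add, h₁, h₂]
          exact (map_add (ψm D K n) B₁ B₂).symm⟩
      zero_mem' := fun C => ⟨0, by
        rw [eval_zero]
        exact (map_zero (ψm D K n)).symm⟩
      neg_mem' := fun {a} ha C => by
        obtain ⟨B, hB⟩ := ha C
        exact ⟨-B, by
          rw [eval_neg, hB]
          exact (map_neg (ψm D K n) B).symm⟩ }, rfl, ?_⟩
    intro p C
    refine ⟨p.eval C, ?_⟩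
    show (p.map ((algebraMap D K).mapMatrix)).eval (((algebraMap D K).mapMatrix) C) = _
    rw [eval_map, eval₂_at_apply]
    rfl
end

section
/- Let D be an integral domain with fraction field K. Under the natural isomorphism φ : M_n(K)[x] → M_n(K[x]) sending Σ_k (a_ij^(k)) x^k to the matrix with (i,j) entry Σ_k a_ij^(k) x^k, the image of Int_D[M_n(D)] equals M_n(Int_D(M_n(D))), the ring of n×n matrices with entries in Int_D(M_n(D)). -/
open Polynomial Matrix

section Aux1

lemma eval_mul_C_unit {R : Type*} [Ring R] (f : R[X]) (u : Rˣ) (x : R) :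
    (f * C (u : R)).eval x = f.eval ((u : R) * x * (↑u⁻¹ : R)) * u := by
  induction f using Polynomial.induction_on' with
  | add p q hp hq => simp [add_mul, hp, hq]
  | monomial k a =>
      have h : (u : R) * x ^ k * ↑u⁻¹ * ↑u = (u : R) * x ^ k := by
        rw [mul_assoc, Units.inv_mul, mul_one]
      rw [monomial_mul_C, eval_monomial, eval_monomial, Units.conj_pow, mul_assoc, mul_assoc, h]

end Aux1

section Aux1b

variable {K : Type*} [CommRing K] {ι : Type*} [Fintype ι] [DecidableEq ι]

lemma std_mul_std (a i j c : ι) (M : Matrix ι ι K) :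
    Matrix.single a i (1 : K) * M * Matrix.single j c 1 = Matrix.single a c (M i j) := by
  ext p q
  by_cases hp : p = a
  · subst hp
    by_cases hq : q = c
    · subst hq
      rw [mul_assoc, Matrix.single_mul_apply_same,
        Matrix.mul_single_apply_same]
      simp [Matrix.single]
    · rw [Matrix.mul_single_apply_of_ne _ _ _ _ _ hq]
      simp [Matrix.single, hq, Ne.symm hq]
  · rw [mul_assoc, Matrix.single_mul_apply_of_ne _ _ _ _ _ hp]
    simp [Matrix.single, hp, Ne.symm hp]

lemma matPolyEquiv_symm_monomial (k : ℕ) (M : Matrix ι ι K) (i j : ι) :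
    matPolyEquiv.symm (monomial k M) i j = monomial k (M i j) := by
  ext l
  simp [matPolyEquiv_symm_apply_coeff, coeff_monomial, apply_ite (fun N : Matrix ι ι K => N i j)]

lemma eval_std_mul_std (f : (Matrix ι ι K)[X]) (a i j c : ι) (X : Matrix ι ι K) :
    (C (Matrix.single a i (1:K)) * f * C (Matrix.single j c 1)).eval X
      = Matrix.single a c (1 : K) * (aeval X (matPolyEquiv.symm f i j)) := by
  induction f using Polynomial.induction_on' with
  | add p q hp hq =>
      have h : matPolyEquiv.symm (p + q) i j
          = matPolyEquiv.symm p i j + matPolyEquiv.symm q i j := by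
        simp [map_add, Matrix.add_apply]
      simp [mul_add, add_mul, hp, hq, h]
  | monomial k M =>
      rw [C_mul_monomial, monomial_mul_C, eval_monomial, std_mul_std,
        matPolyEquiv_symm_monomial, aeval_monomial, Algebra.algebraMap_eq_smul_one]
      rw [smul_mul_assoc, one_mul, mul_smul_comm, ← smul_mul_assoc, smul_single,
        smul_eq_mul, mul_one]

lemma sum_stdBasisMatrix_diag : ∑ a : ι, Matrix.single a a (1:K) = 1 := by
  ext p q
  rw [Matrix.sum_apply]
  by_cases h : p = q
  · subst h
    simp [Matrix.single, Matrix.one_apply]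
  · rw [Matrix.one_apply_ne h]
    refine Finset.sum_eq_zero fun x _ => ?_
    simp only [Matrix.single, Matrix.of_apply, ite_eq_right_iff, and_imp]
    rintro rfl rfl
    exact absurd rfl h

end Aux1b

section Aux2

variable {D K : Type*} [CommRing D] [CommRing K] [Algebra D K] {n : ℕ}

lemma ι_sub (M N : Matrix (Fin n) (Fin n) D) :
    (M - N).map (algebraMap D K) = M.map (algebraMap D K) - N.map (algebraMap D K) :=
  Matrix.map_sub _ (fun a b => map_sub _ a b) M N

lemma ι_add (M N : Matrix (Fin n) (Fin n) D) :
    (M + N).map (algebraMap D K) = M.map (algebraMap D K) + N.map (algebraMap D K) :=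
  Matrix.map_add _ (fun a b => map_add _ a b) M N

lemma ι_mul (M N : Matrix (Fin n) (Fin n) D) :
    (M * N).map (algebraMap D K) = M.map (algebraMap D K) * N.map (algebraMap D K) :=
  Matrix.map_mul

lemma ι_one : ((1 : Matrix (Fin n) (Fin n) D)).map (algebraMap D K) = 1 :=
  Matrix.map_one _ (map_zero _) (map_one _)

lemma map_std (i j : Fin n) (d : D) :
    (Matrix.single i j d).map (algebraMap D K) = Matrix.single i j (algebraMap D K d) := by
  ext a b
  simp [Matrix.single, Matrix.map_apply, apply_ite (algebraMap D K)]

def IntSet (D K : Type*) [CommRing D] [CommRing K] [Algebra D K] (n : ℕ) :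
    Set ((Matrix (Fin n) (Fin n) K)[X]) :=
  {f | ∀ C : Matrix (Fin n) (Fin n) D, ∃ B : Matrix (Fin n) (Fin n) D,
    f.eval (C.map (algebraMap D K)) = B.map (algebraMap D K)}

lemma IntSet.sub {f g} (hf : f ∈ IntSet D K n) (hg : g ∈ IntSet D K n) :
    f - g ∈ IntSet D K n := by
  intro C
  obtain ⟨B1, h1⟩ := hf C
  obtain ⟨B2, h2⟩ := hg C
  exact ⟨B1 - B2, by rw [eval_sub, h1, h2, ι_sub]⟩

lemma IntSet.C_mul {f} (hf : f ∈ IntSet D K n) (N : Matrix (Fin n) (Fin n) D) :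
    C (N.map (algebraMap D K)) * f ∈ IntSet D K n := by
  intro C
  obtain ⟨B, h⟩ := hf C
  exact ⟨N * B, by rw [eval_C_mul, h, ι_mul]⟩

lemma IntSet.mul_unit {f} (hf : f ∈ IntSet D K n) (u : (Matrix (Fin n) (Fin n) D)ˣ) :
    f * C ((u : Matrix (Fin n) (Fin n) D).map (algebraMap D K)) ∈ IntSet D K n := by
  intro C
  obtain ⟨B, h⟩ := hf ((u : Matrix (Fin n) (Fin n) D) * C * (↑u⁻¹ : Matrix (Fin n) (Fin n) D))
  set w : (Matrix (Fin n) (Fin n) K)ˣ :=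
    Units.map ((algebraMap D K).mapMatrix : Matrix (Fin n) (Fin n) D →+* _).toMonoidHom u with hw
  have hcoe : ((u : Matrix (Fin n) (Fin n) D).map (algebraMap D K))
      = (w : Matrix (Fin n) (Fin n) K) := rfl
  have hcoe' : ((↑u⁻¹ : Matrix (Fin n) (Fin n) D).map (algebraMap D K))
      = ((↑w⁻¹ : Matrix (Fin n) (Fin n) K)) := rfl
  refine ⟨B * u, ?_⟩
  rw [hcoe, eval_mul_C_unit, ι_mul, ← h, ι_mul, ι_mul, hcoe, hcoe']

lemma IntSet.mul_std_ne {f} (hf : f ∈ IntSet D K n) {i j : Fin n} (hij : j ≠ i) :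
    f * C ((Matrix.single i j (1:D)).map (algebraMap D K)) ∈ IntSet D K n := by
  have hE : Matrix.single i j (1:D) * Matrix.single i j (1:D) = 0 :=
    by simp [hij]
  set u : (Matrix (Fin n) (Fin n) D)ˣ :=
    ⟨1 + Matrix.single i j 1, 1 - Matrix.single i j 1,
      by simp [mul_sub, add_mul, hE],
      by simp [sub_mul, mul_add, hE]⟩ with hu
  have key : f * C ((Matrix.single i j (1:D)).map (algebraMap D K))
      = f * C (((u : Matrix (Fin n) (Fin n) D)).map (algebraMap D K)) - f := by
    have h1 : (u : Matrix (Fin n) (Fin n) D) = 1 + Matrix.single i j 1 := rfl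
    rw [h1, ι_add, ι_one, C_add, C_1, mul_add, mul_one]
    abel
  rw [key]
  exact IntSet.sub (IntSet.mul_unit hf u) hf

lemma IntSet.mul_std {f} (hf : f ∈ IntSet D K n) (i j : Fin n) :
    f * C ((Matrix.single i j (1:D)).map (algebraMap D K)) ∈ IntSet D K n := by
  rcases eq_or_ne j i with rfl | hij
  · by_cases hn : ∀ l : Fin n, l = j
    · have h1 : Matrix.single j j (1:D) = 1 := by
        ext a b
        rw [hn a, hn b]
        simp [Matrix.single, Matrix.one_apply]
      rw [h1, ι_one, C_1, mul_one]
      exact hf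
    · push_neg at hn
      obtain ⟨l, hl⟩ := hn
      have h2 : Matrix.single j j (1:D) = Matrix.single j l 1 * Matrix.single l j 1 := by
        rw [Matrix.single_mul_single_same, one_mul]
      rw [h2, ι_mul, Polynomial.C_mul, ← mul_assoc]
      exact IntSet.mul_std_ne (IntSet.mul_std_ne hf hl) (Ne.symm hl)
  · exact IntSet.mul_std_ne hf hij

end Aux2

/-- Under the isomorphism `φ : Mₙ(K)[x] ≃ Mₙ(K[x])`, the image of `Int_D[Mₙ(D)]`
is `Mₙ(Int_D(Mₙ(D)))`, the set of matrices whose entries lie in `Int_D(Mₙ(D))`. -/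
theorem stmt_15 {D K : Type*} [CommRing D] [IsDomain D] [Field K] [Algebra D K]
    [IsFractionRing D K] (n : ℕ) :
    (matPolyEquiv (R := K) (n := Fin n)).symm ''
        {f : Polynomial (Matrix (Fin n) (Fin n) K) |
          ∀ C : Matrix (Fin n) (Fin n) D, ∃ B : Matrix (Fin n) (Fin n) D,
            f.eval (C.map (algebraMap D K)) = B.map (algebraMap D K)} =
      {A : Matrix (Fin n) (Fin n) (Polynomial K) | ∀ i j,
        ∀ C : Matrix (Fin n) (Fin n) D, ∃ B : Matrix (Fin n) (Fin n) D,
          Polynomial.aeval (C.map (algebraMap D K)) (A i j) = B.map (algebraMap D K)} := by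
  ext A
  simp only [Set.mem_image, Set.mem_setOf_eq]
  constructor
  · rintro ⟨f, hf, rfl⟩ i j M0
    have hf' : f ∈ IntSet D K n := hf
    have hmem : ∀ c : Fin n, (Polynomial.C ((Matrix.single i i (1:D)).map (algebraMap D K)) *
        (f * Polynomial.C ((Matrix.single j c (1:D)).map (algebraMap D K)))) ∈ IntSet D K n :=
      fun c => IntSet.C_mul (IntSet.mul_std hf' j c) _
    choose B hB using fun c => hmem c M0
    refine ⟨Matrix.of fun c b => B c i b, ?_⟩
    ext c b
    have h := hB c
    simp only [map_std, _root_.map_one] at h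
    rw [← mul_assoc, eval_std_mul_std] at h
    have h2 := congrArg (fun M => M i b) h
    simp only [Matrix.single_mul_apply_same, one_mul, Matrix.map_apply] at h2
    simpa [Matrix.map_apply] using h2
  · intro hA
    refine ⟨matPolyEquiv A, ?_, matPolyEquiv.symm_apply_apply A⟩
    intro M0
    choose B hB using fun p : Fin n × Fin n => hA p.1 p.2 M0
    refine ⟨∑ a : Fin n, ∑ c : Fin n, Matrix.single a c (1:D) * B (a, c), ?_⟩
    have hdecomp : matPolyEquiv A = ∑ a : Fin n, ∑ c : Fin n,
        Polynomial.C (Matrix.single a a (1:K)) * matPolyEquiv A *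
          Polynomial.C (Matrix.single c c (1:K)) := by
      have h1 : ∀ a : Fin n, ∑ c : Fin n,
          Polynomial.C (Matrix.single a a (1:K)) * matPolyEquiv A *
            Polynomial.C (Matrix.single c c (1:K))
          = Polynomial.C (Matrix.single a a (1:K)) * matPolyEquiv A := by
        intro a
        rw [← Finset.mul_sum, ← map_sum, sum_stdBasisMatrix_diag, Polynomial.C_1, mul_one]
      rw [Finset.sum_congr rfl fun a _ => h1 a, ← Finset.sum_mul, ← map_sum,
        sum_stdBasisMatrix_diag, Polynomial.C_1, one_mul]
    conv_lhs => rw [hdecomp]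
    rw [eval_finset_sum]
    have hkey : ∀ a c : Fin n,
        (Polynomial.C (Matrix.single a a (1:K)) * matPolyEquiv A *
          Polynomial.C (Matrix.single c c (1:K))).eval (M0.map (algebraMap D K))
        = Matrix.single a c (1:K) * ((B (a, c)).map (algebraMap D K)) := by
      intro a c
      rw [eval_std_mul_std, AlgEquiv.symm_apply_apply]
      exact congrArg (Matrix.single a c 1 * ·) (hB (a, c))
    simp only [eval_finset_sum, hkey]
    conv_rhs => rw [← RingHom.mapMatrix_apply (algebraMap D K)]
    rw [map_sum]
    refine Finset.sum_congr rfl fun a _ => ?_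
    rw [map_sum]
    refine Finset.sum_congr rfl fun c _ => ?_
    rw [_root_.map_mul, RingHom.mapMatrix_apply, RingHom.mapMatrix_apply, map_std, _root_.map_one]
end

section
/- Let D be an integral domain with fraction field K. If C = (c_ij(x)) ∈ M_n(K[x]) is such that the corresponding element of M_n(K)[x] lies in Int_D[M_n(D)], then each entry c_ij(x) belongs to Int_D(M_n(D)). -/
open Polynomial Matrix

/-- Sandwiching a matrix between matrix units extracts an entry. -/
private lemma aux_sandwich {n : ℕ} {R : Type*} [Ring R] (X : Matrix (Fin n) (Fin n) R)
    (i j p : Fin n) :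
    single p i 1 * X * single j p 1 = single p p (X i j) := by
  ext a b
  rcases eq_or_ne b p with rfl | hb
  · rcases eq_or_ne a b with rfl | ha
    · simp
    · rw [mul_single_apply_same, single_mul_apply_of_ne _ _ _ _ _ ha,
        zero_mul, single_apply_of_row_ne (Ne.symm ha)]
  · rw [mul_single_apply_of_ne _ _ _ _ _ hb,
      single_apply_of_col_ne _ _ (Ne.symm hb)]

private lemma aux_diag_sum {n : ℕ} {R : Type*} [Semiring R] (c : R) :
    ∑ p : Fin n, single p p c = c • (1 : Matrix (Fin n) (Fin n) R) := by
  ext a b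
  simp only [Matrix.sum_apply, Matrix.smul_apply, Matrix.one_apply, single,
    Matrix.of_apply, smul_eq_mul, mul_ite, mul_one, mul_zero, ← ite_and, and_self]
  rcases eq_or_ne a b with rfl | hab
  · simp [Finset.sum_ite_eq', eq_comm]
  · rw [if_neg hab, Finset.sum_eq_zero]
    intro x _
    rw [if_neg]
    rintro ⟨rfl, rfl⟩
    exact hab rfl

private lemma aux_pow_conj {R : Type*} [Monoid R] (u v M : R) (huv : u * v = 1)
    (hvu : v * u = 1) : ∀ k : ℕ, (u * M * v) ^ k = u * M ^ k * v
  | 0 => by simp [huv]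
  | k + 1 => by
    rw [pow_succ, aux_pow_conj u v M huv hvu k, pow_succ]
    simp only [mul_assoc]
    rw [← mul_assoc v u, hvu, one_mul]

/-- If `C = (c_ij(x)) ∈ Mₙ(K[x])` corresponds (under `φ`) to an element of
`Int_D[Mₙ(D)]`, then each entry `c_ij(x)` belongs to `Int_D(Mₙ(D))`. -/
theorem stmt_16 {D K : Type*} [CommRing D] [IsDomain D] [Field K] [Algebra D K]
    [IsFractionRing D K] (n : ℕ) (A : Matrix (Fin n) (Fin n) (Polynomial K))
    (hA : ∀ C : Matrix (Fin n) (Fin n) D, ∃ B : Matrix (Fin n) (Fin n) D,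
        (matPolyEquiv A).eval (C.map (algebraMap D K)) = B.map (algebraMap D K)) :
    ∀ i j, ∀ C : Matrix (Fin n) (Fin n) D, ∃ B : Matrix (Fin n) (Fin n) D,
      Polynomial.aeval (C.map (algebraMap D K)) (A i j) = B.map (algebraMap D K) := by
  classical
  intro i j C₀
  set f := algebraMap D K with hf
  set S : Subring (Matrix (Fin n) (Fin n) K) := (f.mapMatrix (m := Fin n)).range with hSdef
  have hmem : ∀ X : Matrix (Fin n) (Fin n) K,
      X ∈ S ↔ ∃ B : Matrix (Fin n) (Fin n) D, X = B.map f := by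
    intro X
    constructor
    · rintro ⟨B, rfl⟩; exact ⟨B, rfl⟩
    · rintro ⟨B, rfl⟩; exact ⟨B, rfl⟩
  set Φ := matPolyEquiv A with hΦdef
  have hS1 : ∀ M ∈ S, Φ.eval M ∈ S := by
    rintro M ⟨Cm, rfl⟩
    obtain ⟨B, hB⟩ := hA Cm
    exact ⟨B, hB.symm⟩
  set d := Φ.natDegree with hd
  set P : Matrix (Fin n) (Fin n) K → Matrix (Fin n) (Fin n) K → Matrix (Fin n) (Fin n) K :=
    fun W M => ∑ k ∈ Finset.range (d + 1), Φ.coeff k * W * M ^ k with hP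
  -- twisted evaluation at an invertible matrix stays in `S`
  have hPunit : ∀ u v : Matrix (Fin n) (Fin n) K, u ∈ S → v ∈ S → u * v = 1 → v * u = 1 →
      ∀ M ∈ S, P u M ∈ S := by
    intro u v hu hv huv hvu M hM
    have key : P u M = Φ.eval (u * M * v) * u := by
      rw [Polynomial.eval_eq_sum_range, Finset.sum_mul]
      refine Finset.sum_congr rfl fun k _ => ?_
      rw [aux_pow_conj u v M huv hvu k]
      simp only [mul_assoc, hvu, mul_one]
    rw [key]
    exact S.mul_mem (hS1 _ (S.mul_mem (S.mul_mem hu hM) hv)) hu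
  -- right multiplication by an invertible matrix preserves the property
  have hPshift : ∀ W u v : Matrix (Fin n) (Fin n) K, u ∈ S → v ∈ S → u * v = 1 → v * u = 1 →
      (∀ M ∈ S, P W M ∈ S) → ∀ M ∈ S, P (W * u) M ∈ S := by
    intro W u v hu hv huv hvu hW M hM
    have key : P (W * u) M = P W (u * M * v) * u := by
      simp only [hP]
      rw [Finset.sum_mul]
      refine Finset.sum_congr rfl fun k _ => ?_
      rw [aux_pow_conj u v M huv hvu k]
      simp only [mul_assoc, hvu, mul_one]
    rw [key]
    exact S.mul_mem (hW _ (S.mul_mem (S.mul_mem hu hM) hv)) hu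
  have hPsub : ∀ W₁ W₂ : Matrix (Fin n) (Fin n) K, (∀ M ∈ S, P W₁ M ∈ S) →
      (∀ M ∈ S, P W₂ M ∈ S) → ∀ M ∈ S, P (W₁ - W₂) M ∈ S := by
    intro W₁ W₂ h1 h2 M hM
    have key : P (W₁ - W₂) M = P W₁ M - P W₂ M := by
      simp only [hP, mul_sub, sub_mul, Finset.sum_sub_distrib]
    rw [key]
    exact S.sub_mem (h1 M hM) (h2 M hM)
  -- membership of building blocks in `S`
  have hEstd : ∀ a b : Fin n, single a b (1 : K) ∈ S := by
    intro a b
    refine ⟨single a b 1, ?_⟩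
    ext x y
    simp [RingHom.mapMatrix_apply, Matrix.map_apply, single, apply_ite f]
  -- units `1 ± E_{ab}` for `a ≠ b`
  have hunit : ∀ a b : Fin n, a ≠ b →
      (1 + single a b (1 : K)) * (1 - single a b 1) = 1 ∧
      (1 - single a b (1 : K)) * (1 + single a b 1) = 1 := by
    intro a b hab
    have hE2 : single a b (1 : K) * single a b 1 = 0 :=
      single_mul_single_of_ne _ _ _ _ (Ne.symm hab) _
    constructor
    · rw [add_mul, one_mul, mul_sub, mul_one, hE2]; abel
    · rw [sub_mul, one_mul, mul_add, mul_one, hE2]; abel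
  -- off-diagonal matrix units are good
  have hoff : ∀ a b : Fin n, a ≠ b → ∀ M ∈ S, P (single a b 1) M ∈ S := by
    intro a b hab M hM
    obtain ⟨h1, h2⟩ := hunit a b hab
    have hu : (1 + single a b (1 : K)) ∈ S := S.add_mem S.one_mem (hEstd a b)
    have hv : (1 - single a b (1 : K)) ∈ S := S.sub_mem S.one_mem (hEstd a b)
    have h := hPsub (1 + single a b 1) 1
      (hPunit _ _ hu hv h1 h2)
      (hPunit 1 1 S.one_mem S.one_mem (one_mul 1) (one_mul 1)) M hM
    simpa using h
  -- all matrix units are good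
  have hEgood : ∀ a b : Fin n, ∀ M ∈ S, P (single a b 1) M ∈ S := by
    intro a b
    rcases eq_or_ne a b with rfl | hab
    · by_cases hq : ∃ c, c ≠ a
      · obtain ⟨c, hc⟩ := hq
        obtain ⟨h1, h2⟩ := hunit c a hc
        have hu : (1 + single c a (1 : K)) ∈ S := S.add_mem S.one_mem (hEstd c a)
        have hv : (1 - single c a (1 : K)) ∈ S := S.sub_mem S.one_mem (hEstd c a)
        have hac : ∀ M ∈ S, P (single a c 1) M ∈ S := hoff a c (Ne.symm hc)
        have hsh := hPshift (single a c 1) _ _ hu hv h1 h2 hac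
        have h := hPsub _ _ hsh hac
        have hsimp : single a c (1 : K) * (1 + single c a 1) -
            single a c 1 = single a a 1 := by
          rw [mul_add, mul_one, single_mul_single_same, mul_one, add_sub_cancel_left]
        rw [hsimp] at h
        exact h
      · push_neg at hq
        have hone : single a a (1 : K) = 1 := by
          ext x y
          rw [hq x, hq y]
          simp
        rw [hone]
        exact hPunit 1 1 S.one_mem S.one_mem (one_mul 1) (one_mul 1)
    · exact hoff a b hab
  -- assemble
  have hM : C₀.map f ∈ S := ⟨C₀, rfl⟩
  rw [show (∃ B : Matrix (Fin n) (Fin n) D,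
      Polynomial.aeval (C₀.map f) (A i j) = B.map f) ↔
      Polynomial.aeval (C₀.map f) (A i j) ∈ S from (hmem _).symm]
  have hdeg : (A i j).natDegree < d + 1 := by
    refine Nat.lt_succ_of_le (Polynomial.natDegree_le_iff_coeff_eq_zero.mpr fun m hm => ?_)
    have := Polynomial.coeff_eq_zero_of_natDegree_lt (lt_of_le_of_lt (le_refl d) hm)
    have h0 : Φ.coeff m = 0 := Polynomial.coeff_eq_zero_of_natDegree_lt hm
    have := matPolyEquiv_coeff_apply A m i j
    rw [← this, h0]
    rfl
  have key : Polynomial.aeval (C₀.map f) (A i j)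
      = ∑ p : Fin n, single p i 1 * P (single j p 1) (C₀.map f) := by
    rw [Polynomial.aeval_eq_sum_range' hdeg]
    simp only [hP, Finset.mul_sum]
    rw [Finset.sum_comm]
    refine Finset.sum_congr rfl fun k _ => ?_
    have : ∀ p : Fin n, single p i 1 *
        (Φ.coeff k * single j p 1 * (C₀.map f) ^ k)
        = single p p (Φ.coeff k i j) * (C₀.map f) ^ k := by
      intro p
      rw [← mul_assoc, ← mul_assoc, aux_sandwich]
    rw [Finset.sum_congr rfl fun p _ => this p, ← Finset.sum_mul, aux_diag_sum,
      matPolyEquiv_coeff_apply, smul_mul_assoc, one_mul]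
  rw [key]
  exact S.sum_mem fun p _ => S.mul_mem (hEstd p i) (hEgood j p (C₀.map f) hM)
end

section
/- Let D be an integral domain and d ∈ D \ {0}. If g ∈ D[x] is divisible modulo dD[x] by every monic polynomial of degree n in D[x], then for every C ∈ M_n(D), g(C) ∈ M_n(dD), i.e., every entry of g(C) is divisible by d. -/
open Polynomial

/-- If `g ∈ D[x]` is divisible modulo `dD[x]` by every monic polynomial of degree `n`,
then for every `C ∈ Mₙ(D)`, every entry of `g(C)` is divisible by `d`. -/
theorem stmt_19 {D : Type*} [CommRing D] [IsDomain D] (n : ℕ) (d : D) (hd : d ≠ 0)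
    (g : D[X])
    (hdiv : ∀ h : D[X], h.Monic → h.natDegree = n →
      ∃ q r : D[X], g = q * h + Polynomial.C d * r) :
    ∀ C : Matrix (Fin n) (Fin n) D, ∀ i j, d ∣ Polynomial.aeval C g i j := by
  intro C i j
  obtain ⟨q, r, hqr⟩ := hdiv (Matrix.charpoly C) (Matrix.charpoly_monic C)
    (by simpa using Matrix.charpoly_natDegree_eq_dim C)
  have h0 : Polynomial.aeval C (Matrix.charpoly C) = 0 := Matrix.aeval_self_charpoly C
  have : Polynomial.aeval C g = Polynomial.aeval C (Polynomial.C d) * Polynomial.aeval C r := by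
    rw [hqr]; simp [h0]
  rw [this]
  rw [Matrix.mul_apply]
  refine Finset.dvd_sum fun k _ => ?_
  by_cases hk : i = k <;>
    simp [hk, Polynomial.aeval_C, Matrix.algebraMap_matrix_apply, mul_comm]
end
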